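/- arXiv:1507.00290 — 13 statements merged into one kernel-verified Lean document; each statement's English description precedes it below -/
import Mathlib

section
/- For any closed convex cone K and integer k ≥ 1, the order-k facial reduction cone FR_k(K) is a convex cone: it is closed under nonnegative scalar multiplication and under addition. In particular, if (y_1,…,y_k) ∈ FR_k(K) and (z_1,…,z_k) ∈ FR_k(K), then (y_1+z_1,…,y_k+z_k) ∈ FR_k(K). -/
open scoped RealInnerProductSpace

variable {Y : Type*} [NormedAddCommGroup Y] [InnerProductSpace ℝ Y] [FiniteDimensional ℝ Y]

/-- The dual cone of a set `S`: all vectors having nonnegative inner product with every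
element of `S`. -/
def dualSet (S : Set Y) : Set Y := {y | ∀ x ∈ S, 0 ≤ ⟪x, y⟫}

/-- The orthogonal complement (as a set) of the span of `S`. -/
def perpSet (S : Set Y) : Set Y := {y | ∀ x ∈ S, ⟪x, y⟫ = 0}

/-- `K ∩ y₁^⊥ ∩ … ∩ y_{i-1}^⊥`. -/
def frCut {k : ℕ} (K : Set Y) (y : Fin k → Y) (i : Fin k) : Set Y :=
  K ∩ {x | ∀ j : Fin k, j < i → ⟪y j, x⟫ = 0}

/-- Membership in the order-`k` facial reduction cone `FR_k(K)`:
`y₁ ∈ K*` and `y_i ∈ (K ∩ y₁^⊥ ∩ … ∩ y_{i-1}^⊥)*` for each `i`. -/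
def IsFRSeq {k : ℕ} (K : Set Y) (y : Fin k → Y) : Prop :=
  ∀ i : Fin k, y i ∈ dualSet (frCut K y i)


/-- For a closed convex cone `K` and `k ≥ 1`, the facial reduction cone `FR_k(K)` is a
convex cone: closed under nonnegative scaling and under addition. -/
theorem stmt_1 (K : Set Y) (hKcl : IsClosed K) (hKconv : Convex ℝ K)
    (hKcone : ∀ c : ℝ, 0 ≤ c → ∀ x ∈ K, c • x ∈ K) (hK0 : (0 : Y) ∈ K)
    (k : ℕ) (hk : 1 ≤ k) :
    (∀ c : ℝ, 0 ≤ c → ∀ y : Fin k → Y, IsFRSeq K y → IsFRSeq K (fun i => c • y i)) ∧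
    (∀ y z : Fin k → Y, IsFRSeq K y → IsFRSeq K z →
      IsFRSeq K (fun i => y i + z i)) := by
  constructor
  · intro c hc y hy i x hx
    rcases eq_or_lt_of_le hc with hc0 | hcpos
    · simp [← hc0]
    · have hx' : x ∈ frCut K y i := by
        refine ⟨hx.1, fun j hj => ?_⟩
        have := hx.2 j hj
        simp only [inner_smul_left, RCLike.conj_to_real] at this
        have := (mul_eq_zero.mp this).resolve_left (ne_of_gt hcpos)
        exact this
      have := hy i x hx'
      rw [real_inner_smul_right]
      positivity
  · intro y z hy hz i x hx
    -- key: for j < i, ⟪y j, x⟫ = 0 and ⟪z j, x⟫ = 0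
    have key : ∀ n : ℕ, ∀ hn : n < k, (⟨n, hn⟩ : Fin k) < i →
        ⟪y ⟨n, hn⟩, x⟫ = 0 ∧ ⟪z ⟨n, hn⟩, x⟫ = 0 := by
      intro n
      induction n using Nat.strong_induction_on with
      | _ n ih =>
        intro hn hni
        have hcy : x ∈ frCut K y ⟨n, hn⟩ := by
          refine ⟨hx.1, fun m hm => ?_⟩
          exact (ih m.val (by exact_mod_cast hm) m.isLt
            (lt_trans (by simpa using hm) hni)).1
        have hcz : x ∈ frCut K z ⟨n, hn⟩ := by
          refine ⟨hx.1, fun m hm => ?_⟩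
          exact (ih m.val (by exact_mod_cast hm) m.isLt
            (lt_trans (by simpa using hm) hni)).2
        have h1 : 0 ≤ ⟪x, y ⟨n, hn⟩⟫ := hy _ x hcy
        have h2 : 0 ≤ ⟪x, z ⟨n, hn⟩⟫ := hz _ x hcz
        have hsum : ⟪y ⟨n, hn⟩ + z ⟨n, hn⟩, x⟫ = 0 := hx.2 _ hni
        rw [inner_add_left] at hsum
        rw [real_inner_comm] at h1 h2
        constructor <;> linarith
    have hcy : x ∈ frCut K y i := ⟨hx.1, fun j hj => (key j.val j.isLt (by simpa using hj)).1⟩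
    have hcz : x ∈ frCut K z i := ⟨hx.1, fun j hj => (key j.val j.isLt (by simpa using hj)).2⟩
    have := hy i x hcy
    have := hz i x hcz
    rw [inner_add_right]
    linarith
end

section
/- Let K and C be closed convex cones in finite-dimensional Euclidean spaces. Then ((y_1,z_1),…,(y_k,z_k)) ∈ FR_k(K × C) if and only if (y_1,…,y_k) ∈ FR_k(K) and (z_1,…,z_k) ∈ FR_k(C). -/
open scoped RealInnerProductSpace

variable {Y : Type*} [NormedAddCommGroup Y] [InnerProductSpace ℝ Y] [FiniteDimensional ℝ Y]

/-- `((y_1,z_1),...,(y_k,z_k)) ∈ FR_k(K × C)` iff `(y_1,...,y_k) ∈ FR_k(K)` and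
`(z_1,...,z_k) ∈ FR_k(C)`. The product space carries the L² inner product. -/
theorem stmt_3 {Z : Type*} [NormedAddCommGroup Z] [InnerProductSpace ℝ Z]
    [FiniteDimensional ℝ Z]
    (K : Set Y) (hKcl : IsClosed K) (hKconv : Convex ℝ K)
    (hKcone : ∀ c : ℝ, 0 ≤ c → ∀ x ∈ K, c • x ∈ K) (hK0 : (0 : Y) ∈ K)
    (C : Set Z) (hCcl : IsClosed C) (hCconv : Convex ℝ C)
    (hCcone : ∀ c : ℝ, 0 ≤ c → ∀ x ∈ C, c • x ∈ C) (hC0 : (0 : Z) ∈ C)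
    (k : ℕ) (w : Fin k → WithLp 2 (Y × Z)) :
    IsFRSeq {p : WithLp 2 (Y × Z) |
        (WithLp.equiv 2 (Y × Z) p).1 ∈ K ∧ (WithLp.equiv 2 (Y × Z) p).2 ∈ C} w ↔
      IsFRSeq K (fun i => (WithLp.equiv 2 (Y × Z) (w i)).1) ∧
      IsFRSeq C (fun i => (WithLp.equiv 2 (Y × Z) (w i)).2) := by
  set y : Fin k → Y := fun i => (WithLp.equiv 2 (Y × Z) (w i)).1 with hy
  set z : Fin k → Z := fun i => (WithLp.equiv 2 (Y × Z) (w i)).2 with hz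
  constructor
  · intro h
    constructor
    · intro i x hx
      have hmem : ((WithLp.equiv 2 (Y × Z)).symm (x, 0)) ∈
          frCut {p : WithLp 2 (Y × Z) |
            (WithLp.equiv 2 (Y × Z) p).1 ∈ K ∧ (WithLp.equiv 2 (Y × Z) p).2 ∈ C} w i := by
        refine ⟨⟨hx.1, hC0⟩, fun j hj => ?_⟩
        have h0 : ⟪(w j).fst, x⟫ = 0 := hx.2 j hj
        show (⟪(w j).fst, x⟫ + ⟪(w j).snd, (0:Z)⟫ : ℝ) = 0
        simpa using h0
      have := h i _ hmem
      have h' : 0 ≤ ⟪x, (w i).fst⟫ := by simpa [WithLp.prod_inner_apply] using this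
      exact h'
    · intro i x hx
      have hmem : ((WithLp.equiv 2 (Y × Z)).symm (0, x)) ∈
          frCut {p : WithLp 2 (Y × Z) |
            (WithLp.equiv 2 (Y × Z) p).1 ∈ K ∧ (WithLp.equiv 2 (Y × Z) p).2 ∈ C} w i := by
        refine ⟨⟨hK0, hx.1⟩, fun j hj => ?_⟩
        have h0 : ⟪(w j).snd, x⟫ = 0 := hx.2 j hj
        show (⟪(w j).fst, (0:Y)⟫ + ⟪(w j).snd, x⟫ : ℝ) = 0
        simpa using h0
      have := h i _ hmem
      have h' : 0 ≤ ⟪x, (w i).snd⟫ := by simpa [WithLp.prod_inner_apply] using this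
      exact h'
  · rintro ⟨hY, hZ⟩ i p hp
    obtain ⟨⟨hp1, hp2⟩, hperp⟩ := hp
    -- strong induction: each component inner product vanishes separately
    have step : ∀ j : Fin k, j < i →
        (∀ j' : Fin k, j' < j →
          ⟪y j', (WithLp.equiv 2 (Y × Z) p).1⟫ = 0 ∧
          ⟪z j', (WithLp.equiv 2 (Y × Z) p).2⟫ = 0) →
        ⟪y j, (WithLp.equiv 2 (Y × Z) p).1⟫ = 0 ∧
        ⟪z j, (WithLp.equiv 2 (Y × Z) p).2⟫ = 0 := by
      intro j hji ih
      have hy0 : 0 ≤ ⟪(WithLp.equiv 2 (Y × Z) p).1, y j⟫ := by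
        refine hY j _ ⟨hp1, fun j' hj' => ?_⟩
        exact (ih j' hj').1
      have hz0 : 0 ≤ ⟪(WithLp.equiv 2 (Y × Z) p).2, z j⟫ := by
        refine hZ j _ ⟨hp2, fun j' hj' => ?_⟩
        exact (ih j' hj').2
      have hsum : ⟪y j, (WithLp.equiv 2 (Y × Z) p).1⟫ +
          ⟪z j, (WithLp.equiv 2 (Y × Z) p).2⟫ = 0 := hperp j hji
      rw [real_inner_comm] at hy0 hz0
      constructor <;> linarith
    have key : ∀ j : Fin k, j < i →
        ⟪y j, (WithLp.equiv 2 (Y × Z) p).1⟫ = 0 ∧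
        ⟪z j, (WithLp.equiv 2 (Y × Z) p).2⟫ = 0 := by
      have aux : ∀ n : ℕ, ∀ j : Fin k, (j : ℕ) ≤ n → j < i →
          ⟪y j, (WithLp.equiv 2 (Y × Z) p).1⟫ = 0 ∧
          ⟪z j, (WithLp.equiv 2 (Y × Z) p).2⟫ = 0 := by
        intro n
        induction n with
        | zero =>
          intro j hjn hji
          refine step j hji fun j' hj' => absurd (Fin.lt_iff_val_lt_val.mp hj') (by omega)
        | succ n ihn =>
          intro j hjn hji
          refine step j hji fun j' hj' => ?_
          have : (j' : ℕ) ≤ n := by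
            have := Fin.lt_iff_val_lt_val.mp hj'; omega
          exact ihn j' this (lt_trans hj' hji)
      intro j hji
      exact aux j j le_rfl hji
    have hxK : 0 ≤ ⟪(WithLp.equiv 2 (Y × Z) p).1, y i⟫ := by
      exact hY i _ ⟨hp1, fun j hj => (key j hj).1⟩
    have hxC : 0 ≤ ⟪(WithLp.equiv 2 (Y × Z) p).2, z i⟫ := by
      exact hZ i _ ⟨hp2, fun j hj => (key j hj).2⟩
    have : (⟪p, w i⟫ : ℝ) = ⟪(WithLp.equiv 2 (Y × Z) p).1, y i⟫ +
        ⟪(WithLp.equiv 2 (Y × Z) p).2, z i⟫ := rfl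
    rw [this]
    positivity
end

section
/- Let K be a closed convex cone, A : ℝ^m → Y a linear map with rows a_1,…,a_m ∈ Y, and c ∈ ℝ^m. Suppose there exist ℓ ≥ 0 and (y_1,…,y_{ℓ+1}) ∈ FR_{ℓ+1}(K) with A* y_i = 0 for i = 1,…,ℓ and A* y_{ℓ+1} = c. Then the system { x ∈ ℝ^m : A x ∈ K, ⟨c,x⟩ = −1 } is infeasible; that is, the conic program inf{⟨b,y⟩ : A*y = c, y ∈ K*} is not strongly infeasible. -/
open scoped RealInnerProductSpace

variable {Y : Type*} [NormedAddCommGroup Y] [InnerProductSpace ℝ Y] [FiniteDimensional ℝ Y]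

/-- If `(y_1,...,y_{l+1})` is in `FR_{l+1}(K)` with `A* y_i = 0` for `i ≤ l` and
`A* y_{l+1} = c`, then the alternative system `Ax ∈ K, ⟨c,x⟩ = -1` is infeasible,
i.e. the dual system is not strongly infeasible. -/
theorem stmt_5 (K : Set Y) (hKcl : IsClosed K) (hKconv : Convex ℝ K)
    (hKcone : ∀ c : ℝ, 0 ≤ c → ∀ x ∈ K, c • x ∈ K) (hK0 : (0 : Y) ∈ K)
    (m l : ℕ) (a : Fin m → Y) (c : Fin m → ℝ)
    (y : Fin (l + 1) → Y) (hy : IsFRSeq K y)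
    (hzero : ∀ i : Fin (l + 1), (i : ℕ) < l → ∀ j : Fin m, ⟪a j, y i⟫ = 0)
    (hc : ∀ j : Fin m, ⟪a j, y (Fin.last l)⟫ = c j) :
    ¬ ∃ x : Fin m → ℝ, (∑ j, x j • a j) ∈ K ∧ (∑ j, c j * x j) = -1 := by
  rintro ⟨x, hxK, hcx⟩
  have hmem : (∑ j, x j • a j) ∈ frCut K y (Fin.last l) := by
    refine ⟨hxK, fun j hj => ?_⟩
    have hj' : (j : ℕ) < l := by simpa [Fin.lt_def] using hj
    calc ⟪y j, ∑ k, x k • a k⟫ = ∑ k, x k * ⟪y j, a k⟫ := by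
          simp [inner_sum, real_inner_smul_right]
      _ = 0 := by
          apply Finset.sum_eq_zero; intro k _
          rw [real_inner_comm, hzero j hj' k]; ring
  have hge := hy (Fin.last l) _ hmem
  have heq : ⟪∑ j, x j • a j, y (Fin.last l)⟫ = -1 := by
    rw [sum_inner]
    rw [Finset.sum_congr rfl (fun j _ => show ⟪x j • a j, y (Fin.last l)⟫ = c j * x j by
      rw [real_inner_smul_left, hc j]; ring)]
    exact hcx
  linarith
end

section
/- Let K be a closed convex cone, A : ℝ^m → Y linear, b ∈ Y, c ∈ ℝ^m. Suppose x ∈ ℝ^m satisfies b − Ax ∈ K, and (y_1,…,y_{k+1}) ∈ FR_{k+1}(K) satisfies A* y_i = 0 and ⟨b, y_i⟩ = 0 for i = 1,…,k, and A* y_{k+1} = c. Then ⟨b, y_{k+1}⟩ ≥ ⟨c, x⟩ (weak duality for the extended dual). -/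
open scoped RealInnerProductSpace

variable {Y : Type*} [NormedAddCommGroup Y] [InnerProductSpace ℝ Y] [FiniteDimensional ℝ Y]

/-- Weak duality for the extended dual: if `b - Ax ∈ K` and `(y_1,...,y_{k+1})` is in
`FR_{k+1}(K)` with `A* y_i = 0, ⟨b,y_i⟩ = 0` for `i ≤ k` and `A* y_{k+1} = c`, then
`⟨c,x⟩ ≤ ⟨b, y_{k+1}⟩`. -/
theorem stmt_7 (K : Set Y) (hKcl : IsClosed K) (hKconv : Convex ℝ K)
    (hKcone : ∀ c : ℝ, 0 ≤ c → ∀ x ∈ K, c • x ∈ K) (hK0 : (0 : Y) ∈ K)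
    (m k : ℕ) (a : Fin m → Y) (b : Y) (c : Fin m → ℝ)
    (x : Fin m → ℝ) (hx : b - ∑ j, x j • a j ∈ K)
    (y : Fin (k + 1) → Y) (hy : IsFRSeq K y)
    (hzero : ∀ i : Fin (k + 1), (i : ℕ) < k →
      (∀ j : Fin m, ⟪a j, y i⟫ = 0) ∧ ⟪b, y i⟫ = 0)
    (hc : ∀ j : Fin m, ⟪a j, y (Fin.last k)⟫ = c j) :
    (∑ j, c j * x j) ≤ ⟪b, y (Fin.last k)⟫ := by
  set s := b - ∑ j, x j • a j with hs_def
  have hsum : ∀ i : Fin (k + 1), ⟪s, y i⟫ = ⟪b, y i⟫ - ∑ j, x j * ⟪a j, y i⟫ := by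
    intro i
    simp [hs_def, inner_sub_left, sum_inner, inner_smul_left]
  have hmem : s ∈ frCut K y (Fin.last k) := by
    refine ⟨hx, fun j hj => ?_⟩
    have hj' : (j : ℕ) < k := hj
    obtain ⟨h1, h2⟩ := hzero j hj'
    rw [real_inner_comm, hsum j, h2]
    simp [h1]
  have h0 : 0 ≤ ⟪s, y (Fin.last k)⟫ := hy (Fin.last k) s hmem
  rw [hsum] at h0
  have : ∑ j, x j * ⟪a j, y (Fin.last k)⟫ = ∑ j, c j * x j := by
    refine Finset.sum_congr rfl fun j _ => ?_
    rw [hc j, mul_comm]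
  linarith [this ▸ h0]
end

section
/- Let K be a closed convex cone, and suppose (y_1,…,y_k) ∈ FR_{k+1}(K) satisfies A* y_i = 0, ⟨b, y_i⟩ = 0 for i = 1,…,k, A* y_{k+1} = 0 and ⟨b, y_{k+1}⟩ = −1. Then the system { x ∈ ℝ^m : b − Ax ∈ K } is infeasible. -/
open scoped RealInnerProductSpace

variable {Y : Type*} [NormedAddCommGroup Y] [InnerProductSpace ℝ Y] [FiniteDimensional ℝ Y]

/-- If `(y_1,...,y_{k+1})` is in `FR_{k+1}(K)` with `A* y_i = 0, ⟨b,y_i⟩ = 0` for `i ≤ k`,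
`A* y_{k+1} = 0` and `⟨b, y_{k+1}⟩ = -1`, then the system `b - Ax ∈ K` is infeasible. -/
theorem stmt_8 (K : Set Y) (hKcl : IsClosed K) (hKconv : Convex ℝ K)
    (hKcone : ∀ c : ℝ, 0 ≤ c → ∀ x ∈ K, c • x ∈ K) (hK0 : (0 : Y) ∈ K)
    (m k : ℕ) (a : Fin m → Y) (b : Y)
    (y : Fin (k + 1) → Y) (hy : IsFRSeq K y)
    (hzero : ∀ i : Fin (k + 1), (i : ℕ) < k →
      (∀ j : Fin m, ⟪a j, y i⟫ = 0) ∧ ⟪b, y i⟫ = 0)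
    (hlastA : ∀ j : Fin m, ⟪a j, y (Fin.last k)⟫ = 0)
    (hlastb : ⟪b, y (Fin.last k)⟫ = -1) :
    ¬ ∃ x : Fin m → ℝ, b - ∑ j, x j • a j ∈ K := by
  rintro ⟨x, hx⟩
  set s : Y := b - ∑ j, x j • a j with hs
  have key : ∀ i : Fin (k+1), (i : ℕ) < k → ⟪y i, s⟫ = 0 := by
    intro i hi
    obtain ⟨hA, hb⟩ := hzero i hi
    have : ⟪y i, s⟫ = ⟪b, y i⟫ - ∑ j, x j * ⟪a j, y i⟫ := by
      rw [real_inner_comm]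
      simp [hs, inner_sub_left, sum_inner, real_inner_smul_left]
    rw [this, hb]
    simp [hA]
  have hmem : s ∈ frCut K y (Fin.last k) := by
    refine ⟨hx, fun j hj => key j ?_⟩
    simpa [Fin.lt_iff_val_lt_val] using hj
  have h0 := hy (Fin.last k) s hmem
  have : ⟪s, y (Fin.last k)⟫ = -1 := by
    have : ⟪s, y (Fin.last k)⟫ = ⟪b, y (Fin.last k)⟫ - ∑ j, x j * ⟪a j, y (Fin.last k)⟫ := by
      simp [hs, inner_sub_left, sum_inner, real_inner_smul_left]
    rw [this, hlastb]
    simp [hlastA]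
  linarith
end

section
/- Let K be a closed convex cone, a_1,…,a_m, b ∈ Y with (a_1,…,a_ℓ, b) ∈ FR_{ℓ+1}(K*) for some 0 ≤ ℓ ≤ m. Then the system { x ∈ ℝ^m : b − Σ_{i=1}^m x_i a_i ∈ K } is not strongly infeasible; that is, there is no y ∈ K* with ⟨a_i, y⟩ = 0 for all i = 1,…,m and ⟨b, y⟩ = −1. -/
open scoped RealInnerProductSpace

variable {Y : Type*} [NormedAddCommGroup Y] [InnerProductSpace ℝ Y] [FiniteDimensional ℝ Y]

/-- If `(a_1,...,a_l,b)` is in `FR_{l+1}(K*)` with `l ≤ m`, then the primal system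
`b - Σ x_i a_i ∈ K` is not strongly infeasible: there is no `y ∈ K*` with
`⟨a_i, y⟩ = 0` for all `i` and `⟨b, y⟩ = -1`. -/
theorem stmt_9 (K : Set Y) (hKcl : IsClosed K) (hKconv : Convex ℝ K)
    (hKcone : ∀ c : ℝ, 0 ≤ c → ∀ x ∈ K, c • x ∈ K) (hK0 : (0 : Y) ∈ K)
    (m l : ℕ) (hl : l ≤ m) (a : Fin m → Y) (b : Y)
    (hfr : IsFRSeq (dualSet K) (Fin.snoc (fun i : Fin l => a (Fin.castLE hl i)) b)) :
    ¬ ∃ y ∈ dualSet K, (∀ i : Fin m, ⟪a i, y⟫ = 0) ∧ ⟪b, y⟫ = -1 := by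
  rintro ⟨y, hyK, hay, hby⟩
  have hmem : y ∈ frCut (dualSet K) ((Fin.snoc (fun i : Fin l => a (Fin.castLE hl i)) b : Fin (l+1) → Y))
      (Fin.last l) := by
    refine ⟨hyK, fun j hj => ?_⟩
    have hj' : (j : ℕ) < l := hj
    have : (Fin.snoc (fun i : Fin l => a (Fin.castLE hl i)) b : Fin (l+1) → Y) j
        = a (Fin.castLE hl (j.castLT hj')) := by
      have h2 := Fin.snoc_castSucc (α := fun _ : Fin (l+1) => Y)
        (p := fun i : Fin l => a (Fin.castLE hl i)) (x := b) (i := j.castLT hj')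
      rwa [Fin.castSucc_castLT] at h2
    rw [this]
    exact hay _
  have h := hfr (Fin.last l) y hmem
  rw [Fin.snoc_last] at h
  rw [real_inner_comm] at h
  linarith [hby ▸ h]
end

section
/- For a closed convex cone K that is not a linear subspace and an integer k ≥ 2, the facial reduction cone FR_k(K) is not closed. Conversely, if K is a linear subspace or k = 1, then FR_k(K) is closed. -/
open scoped RealInnerProductSpace

variable {Y : Type*} [NormedAddCommGroup Y] [InnerProductSpace ℝ Y] [FiniteDimensional ℝ Y]

/-- `FR_k(K)` is not closed when `K` is not a linear subspace and `k ≥ 2`; conversely,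
if `K` is a linear subspace or `k = 1` then `FR_k(K)` is closed. -/
theorem stmt_10 (K : Set Y) (hKcl : IsClosed K) (hKconv : Convex ℝ K)
    (hKcone : ∀ c : ℝ, 0 ≤ c → ∀ x ∈ K, c • x ∈ K) (hK0 : (0 : Y) ∈ K)
    (k : ℕ) (hk : 1 ≤ k) :
    ((¬ ∃ S : Submodule ℝ Y, K = (S : Set Y)) → 2 ≤ k →
      ¬ IsClosed {y : Fin k → Y | IsFRSeq K y}) ∧
    (((∃ S : Submodule ℝ Y, K = (S : Set Y)) ∨ k = 1) →
      IsClosed {y : Fin k → Y | IsFRSeq K y}) := by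
  constructor
  · intro hnot hk2 hcl
    -- K is not a subspace: get x̄ ∈ K with -x̄ ∉ K
    have hxbar : ∃ x ∈ K, -x ∉ K := by
      by_contra hforall
      push_neg at hforall
      apply hnot
      refine ⟨{ carrier := K
                add_mem' := ?_
                zero_mem' := hK0
                smul_mem' := ?_ }, rfl⟩
      · intro a b ha hb
        have h2 : ((1:ℝ)/2) • a + ((1:ℝ)/2) • b ∈ K :=
          hKconv ha hb (by norm_num) (by norm_num) (by norm_num)
        have := hKcone 2 (by norm_num) _ h2
        simpa [smul_add, smul_smul] using this
      · intro c x hx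
        rcases le_or_gt 0 c with hc | hc
        · exact hKcone c hc x hx
        · have : c • x = (-c) • (-x) := by simp
          rw [this]
          exact hKcone (-c) (by linarith) _ (hforall x hx)
    obtain ⟨xb, hxbK, hxbn⟩ := hxbar
    -- build the ConvexCone and separate
    set C : ConvexCone ℝ Y :=
      { carrier := K
        smul_mem' := fun c hc x hx => hKcone c hc.le x hx
        add_mem' := by
          intro a ha b hb
          have h2 : ((1:ℝ)/2) • a + ((1:ℝ)/2) • b ∈ K :=
            hKconv ha hb (by norm_num) (by norm_num) (by norm_num)
          have := hKcone 2 (by norm_num) _ h2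
          simpa [smul_add, smul_smul] using this } with hC
    obtain ⟨z, hzK, hzb⟩ : ∃ z : Y, (∀ x ∈ K, 0 ≤ ⟪x, z⟫) ∧ ⟪z, -xb⟫ < 0 := by
      let P : ProperCone ℝ Y :=
        { carrier := K
          add_mem' := fun ha hb => C.add_mem ha hb
          zero_mem' := hK0
          smul_mem' := fun c x hx => hKcone (c : ℝ) c.2 x hx
          isClosed' := hKcl }
      obtain ⟨z, h1, h2⟩ := ProperCone.hyperplane_separation' (x₀ := -xb) P hxbn
      exact ⟨z, fun x hx => h1 x hx, by rwa [real_inner_comm]⟩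
    -- hzb : ⟪z, -xb⟫ < 0, so 0 < ⟪z, xb⟫
    have hzxb : 0 < ⟪z, xb⟫ := by
      have : ⟪z, -xb⟫ = -⟪z, xb⟫ := by simp
      rw [this] at hzb; linarith
    -- the sequence and its limit
    set yseq : ℕ → Fin k → Y := fun n i =>
      if (i : ℕ) = 0 then ((n : ℝ) + 1)⁻¹ • z else if (i : ℕ) = 1 then -z else 0 with hyseq
    set ylim : Fin k → Y := fun i => if (i : ℕ) = 1 then -z else 0 with hylim
    have hmem : ∀ n, yseq n ∈ {y : Fin k → Y | IsFRSeq K y} := by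
      intro n i x hx
      rcases Nat.lt_or_ge (i : ℕ) 1 with hi | hi
      · -- i = 0
        have hi0 : (i : ℕ) = 0 := by omega
        simp only [hyseq, hi0, if_pos rfl, if_true]
        rw [real_inner_smul_right]
        have hz : 0 ≤ ⟪x, z⟫ := hzK x hx.1
        positivity
      · rcases Nat.lt_or_ge (i : ℕ) 2 with hi1 | hi2
        · -- i = 1
          have hi1' : (i : ℕ) = 1 := by omega
          have h0i : (⟨0, by omega⟩ : Fin k) < i := by
            simp [Fin.lt_def, hi1']
          have := hx.2 ⟨0, by omega⟩ h0i
          simp only [hyseq] at this ⊢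
          rw [if_neg (by omega), if_pos hi1']
          simp only [if_pos rfl, if_true] at this
          rw [real_inner_smul_left] at this
          have hnz : ((n : ℝ) + 1)⁻¹ ≠ 0 := by positivity
          have hzx : ⟪z, x⟫ = 0 := by
            rcases mul_eq_zero.mp this with h | h
            · exact absurd h hnz
            · exact h
          rw [inner_neg_right, real_inner_comm, hzx]
          simp
        · -- i ≥ 2
          simp only [hyseq]
          rw [if_neg (by omega), if_neg (by omega)]
          simp
    have htend : Filter.Tendsto yseq Filter.atTop (nhds ylim) := by
      rw [tendsto_pi_nhds]
      intro i
      rcases Nat.lt_or_ge (i : ℕ) 1 with hi | hi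
      · have hi0 : (i : ℕ) = 0 := by omega
        simp only [hyseq, hylim, hi0, if_pos rfl, if_neg (by omega : ¬(0 : ℕ) = 1)]
        have : Filter.Tendsto (fun n : ℕ => ((n : ℝ) + 1)⁻¹ • z) Filter.atTop (nhds ((0:ℝ) • z)) := by
          refine Filter.Tendsto.smul_const ?_ z
          have := tendsto_one_div_add_atTop_nhds_zero_nat (𝕜 := ℝ)
          simpa [one_div] using this
        simpa using this
      · simp only [hyseq, hylim, if_neg (by omega : ¬(i : ℕ) = 0)]
        exact tendsto_const_nhds
    have hlimmem : ylim ∈ {y : Fin k → Y | IsFRSeq K y} :=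
      hcl.mem_of_tendsto htend (Filter.Eventually.of_forall hmem)
    -- contradiction at index 1 with x̄
    have h1 : ylim ⟨1, by omega⟩ ∈ dualSet (frCut K ylim ⟨1, by omega⟩) := hlimmem ⟨1, by omega⟩
    have hxb_in : xb ∈ frCut K ylim ⟨1, by omega⟩ := by
      refine ⟨hxbK, ?_⟩
      intro j hj
      have hj0 : (j : ℕ) = 0 := by
        have := hj
        simp [Fin.lt_def] at this
        omega
      simp only [hylim, hj0, if_neg (by omega : ¬(0:ℕ) = 1)]
      simp
    have := h1 xb hxb_in
    simp only [hylim, if_pos rfl] at this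
    rw [inner_neg_right, real_inner_comm] at this
    linarith
  · rintro (⟨S, rfl⟩ | hk1)
    · -- subspace case
      have hkey : {y : Fin k → Y | IsFRSeq (S : Set Y) y} =
          ⋂ (i : Fin k), ⋂ (x : S), {y : Fin k → Y | ⟪(x : Y), y i⟫ = 0} := by
        ext y
        simp only [Set.mem_iInter, Set.mem_setOf_eq]
        constructor
        · intro hy
          have main : ∀ m : ℕ, ∀ hm : m < k, ∀ x : S, ⟪(x : Y), y ⟨m, hm⟩⟫ = 0 := by
            intro m
            induction m using Nat.strong_induction_on with
            | _ m ih =>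
              intro hm x
              have hcut : ∀ w : Y, w ∈ S → w ∈ frCut (S : Set Y) y ⟨m, hm⟩ := by
                intro w hw
                refine ⟨hw, ?_⟩
                intro j hj
                have hj' : (j : ℕ) < m := hj
                rw [real_inner_comm]
                have := ih (j : ℕ) hj' j.isLt ⟨w, hw⟩
                simpa using this
              have h1 := hy ⟨m, hm⟩ (x : Y) (hcut _ x.2)
              have h2 := hy ⟨m, hm⟩ (-(x : Y)) (hcut _ (neg_mem x.2))
              rw [inner_neg_left] at h2
              linarith
          intro i x
          have := main (i : ℕ) i.isLt x
          simpa using this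
        · intro hy i x hx
          rw [hy i ⟨x, hx.1⟩]
      rw [hkey]
      refine isClosed_iInter fun i => isClosed_iInter fun x => ?_
      exact isClosed_eq (Continuous.inner continuous_const (continuous_apply i)) continuous_const
    · -- k = 1
      subst hk1
      have hkey : {y : Fin 1 → Y | IsFRSeq K y} =
          ⋂ (x : K), {y : Fin 1 → Y | 0 ≤ ⟪(x : Y), y 0⟫} := by
        ext y
        simp only [Set.mem_iInter, Set.mem_setOf_eq]
        constructor
        · intro hy x
          refine hy 0 (x : Y) ⟨x.2, ?_⟩
          intro j hj
          simp [Fin.lt_def] at hj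
        · intro hy i x hx
          have : i = 0 := Subsingleton.elim _ _
          subst this
          exact hy ⟨x, hx.1⟩
      rw [hkey]
      refine isClosed_iInter fun x => ?_
      exact isClosed_le continuous_const (Continuous.inner continuous_const (continuous_apply 0))
end

section
/- Let (y_1,…,y_k) be a finite sequence of n×n real symmetric matrices with (y_1,…,y_k) ∈ FR_k(S^n_+), where S^n_+ is the cone of positive semidefinite matrices. Then there exists an invertible n×n matrix t such that (t^T y_1 t, …, t^T y_k t) is a regularized facial reduction sequence: there exist nonnegative integers p_1,…,p_k with p_1+…+p_k ≤ n such that for each i, the matrix t^T y_i t has an identity block of size p_i in rows/columns p_1+…+p_{i-1}+1 through p_1+…+p_i, zeros in the lower-right (n − p_1−…−p_i)-block and in the off-diagonal blocks between the identity block and that zero block, and arbitrary entries in the first p_1+…+p_{i-1} rows (and symmetric columns). -/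
open Matrix


lemma sum_split {n : ℕ} (m : ℕ) (hm : m ≤ n) (f : Fin n → ℝ) :
    ∑ a, f a = (∑ i : Fin m, f (Fin.castLE hm i)) +
      ∑ i : Fin (n - m), f ⟨m + (i : ℕ), by omega⟩ := by
  rw [← Equiv.sum_comp (finSumFinEquiv.trans (finCongr (by omega : m + (n - m) = n))) f,
    Fintype.sum_sum_type]
  have h1 : ∀ i : Fin m, (finSumFinEquiv.trans (finCongr (by omega : m + (n - m) = n))) (Sum.inl i) = Fin.castLE hm i :=
    fun i => Fin.ext (by simp)
  have h2 : ∀ i : Fin (n - m), (finSumFinEquiv.trans (finCongr (by omega : m + (n - m) = n))) (Sum.inr i) = (⟨m + (i:ℕ), by omega⟩ : Fin n) :=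
    fun i => Fin.ext (by simp)
  rw [Finset.sum_congr rfl fun i _ => congrArg f (h1 i),
    Finset.sum_congr rfl fun i _ => congrArg f (h2 i)]

/-- Embed an `(n-m)×(n-m)` matrix as the lower-right block, with identity upper-left. -/
def emb (m n : ℕ) (X : Matrix (Fin (n - m)) (Fin (n - m)) ℝ) : Matrix (Fin n) (Fin n) ℝ :=
  Matrix.of fun a b =>
    if ha : m ≤ (a : ℕ) then
      (if hb : m ≤ (b : ℕ) then X ⟨(a : ℕ) - m, by omega⟩ ⟨(b : ℕ) - m, by omega⟩ else 0)
    else (if a = b then 1 else 0)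

lemma emb_apply_low {m n : ℕ} (X : Matrix (Fin (n - m)) (Fin (n - m)) ℝ) (a b : Fin n)
    (ha : ¬ m ≤ (a : ℕ)) : emb m n X a b = if a = b then 1 else 0 := by
  simp [emb, ha]

lemma emb_apply_mix {m n : ℕ} (X : Matrix (Fin (n - m)) (Fin (n - m)) ℝ) (a b : Fin n)
    (ha : m ≤ (a : ℕ)) (hb : ¬ m ≤ (b : ℕ)) : emb m n X a b = 0 := by
  simp [emb, ha, hb]

lemma emb_apply_high {m n : ℕ} (X : Matrix (Fin (n - m)) (Fin (n - m)) ℝ) (a b : Fin n)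
    (ha : m ≤ (a : ℕ)) (hb : m ≤ (b : ℕ)) :
    emb m n X a b = X ⟨(a : ℕ) - m, by omega⟩ ⟨(b : ℕ) - m, by omega⟩ := by
  simp [emb, ha, hb]

lemma emb_apply_em {m n : ℕ} (hm : m ≤ n) (X : Matrix (Fin (n - m)) (Fin (n - m)) ℝ)
    (i j : Fin (n - m)) :
    emb m n X ⟨m + (i : ℕ), by omega⟩ ⟨m + (j : ℕ), by omega⟩ = X i j := by
  rw [emb_apply_high X _ _ (by simp) (by simp)]
  congr 1 <;> exact Fin.ext (by simp)

lemma emb_one {m n : ℕ} : emb m n (1 : Matrix (Fin (n - m)) (Fin (n - m)) ℝ) = 1 := by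
  ext a b
  by_cases ha : m ≤ (a : ℕ)
  · by_cases hb : m ≤ (b : ℕ)
    · rw [emb_apply_high _ _ _ ha hb, Matrix.one_apply, Matrix.one_apply]
      by_cases hab : a = b
      · subst hab; simp
      · rw [if_neg hab, if_neg]
        intro h
        apply hab
        have := congrArg Fin.val h
        simp only at this
        exact Fin.ext (by omega)
    · rw [emb_apply_mix _ _ _ ha hb, Matrix.one_apply, if_neg]
      intro h; subst h; exact hb ha
  · rw [emb_apply_low _ _ _ ha, Matrix.one_apply]

lemma emb_mul {m n : ℕ} (hm : m ≤ n) (X Y : Matrix (Fin (n - m)) (Fin (n - m)) ℝ) :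
    emb m n X * emb m n Y = emb m n (X * Y) := by
  ext a b
  rw [Matrix.mul_apply]
  by_cases ha : m ≤ (a : ℕ)
  · by_cases hb : m ≤ (b : ℕ)
    · rw [emb_apply_high _ _ _ ha hb, Matrix.mul_apply,
        sum_split m hm (fun c => emb m n X a c * emb m n Y c b)]
      have hz : (∑ i : Fin m, emb m n X a (Fin.castLE hm i) * emb m n Y (Fin.castLE hm i) b) = 0 := by
        apply Finset.sum_eq_zero
        intro i _
        rw [emb_apply_mix _ _ _ ha (by simp), zero_mul]
      rw [hz, zero_add]
      apply Finset.sum_congr rfl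
      intro i _
      rw [emb_apply_high _ _ _ ha (by simp), emb_apply_high _ _ _ (by simp) hb]
      congr 2 <;> exact Fin.ext (by simp)
    · rw [emb_apply_mix _ _ _ ha hb]
      apply Finset.sum_eq_zero
      intro c _
      by_cases hc : m ≤ (c : ℕ)
      · rw [emb_apply_mix _ _ _ hc hb, mul_zero]
      · rw [emb_apply_mix _ _ _ ha hc, zero_mul]
  · rw [emb_apply_low _ _ _ ha]
    have : ∀ c : Fin n, emb m n X a c * emb m n Y c b
        = if a = c then emb m n Y c b else 0 := by
      intro c
      rw [emb_apply_low _ _ _ ha]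
      split <;> simp
    rw [Finset.sum_congr rfl fun c _ => this c, Finset.sum_ite_eq]
    simp only [Finset.mem_univ, if_true]
    rw [emb_apply_low _ _ _ ha]

lemma entry3 {N : ℕ} (s A : Matrix (Fin N) (Fin N) ℝ) (a b : Fin N) :
    (s.transpose * A * s) a b = ∑ c, ∑ d, s c a * (A c d * s d b) := by
  simp only [Matrix.mul_apply, Matrix.transpose_apply, Finset.sum_mul]
  rw [Finset.sum_comm]
  congr 1; ext d; congr 1; ext c; ring

lemma diag_psd {N : ℕ} (A : Matrix (Fin N) (Fin N) ℝ) (hA : A.PosSemidef) :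
    ∃ t tinv : Matrix (Fin N) (Fin N) ℝ, t * tinv = 1 ∧ tinv * t = 1 ∧
      ∃ p : ℕ, p ≤ N ∧ ∀ a b : Fin N,
        (t.transpose * A * t) a b = if a = b ∧ (a : ℕ) < p then 1 else 0 := by
  have hH := hA.1
  set U : Matrix (Fin N) (Fin N) ℝ := (hH.eigenvectorUnitary : Matrix (Fin N) (Fin N) ℝ) with hU
  set lam : Fin N → ℝ := hH.eigenvalues with hlam
  have hUU : star U * U = 1 := (Matrix.mem_unitaryGroup_iff').mp hH.eigenvectorUnitary.2
  have hUU' : U * star U = 1 := (Matrix.mem_unitaryGroup_iff).mp hH.eigenvectorUnitary.2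
  have hspec : A = U * diagonal lam * star U := by
    have := hH.spectral_theorem
    simpa using this
  set c : Fin N → ℝ := fun i => if lam i = 0 then 1 else (Real.sqrt (lam i))⁻¹ with hc
  have hlam0 : ∀ i, 0 ≤ lam i := fun i => hA.eigenvalues_nonneg i
  have hcne : ∀ i, c i ≠ 0 := by
    intro i
    by_cases h : lam i = 0
    · simp [hc, h]
    · have : 0 < lam i := lt_of_le_of_ne (hlam0 i) (Ne.symm h)
      simp [hc, h]
      positivity
  set s0 : Matrix (Fin N) (Fin N) ℝ := U * diagonal c with hs0
  set s0inv : Matrix (Fin N) (Fin N) ℝ := diagonal (fun i => (c i)⁻¹) * star U with hs0inv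
  have h1 : s0 * s0inv = 1 := by
    rw [hs0, hs0inv, Matrix.mul_assoc, ← Matrix.mul_assoc (diagonal c),
      Matrix.diagonal_mul_diagonal]
    have : (fun i => c i * (c i)⁻¹) = fun _ => (1:ℝ) := by
      funext i; exact mul_inv_cancel₀ (hcne i)
    rw [this, Matrix.diagonal_one, Matrix.one_mul, hUU']
  have h2 : s0inv * s0 = 1 := by
    rw [hs0inv, hs0, Matrix.mul_assoc, ← Matrix.mul_assoc (star U), hUU, Matrix.one_mul,
      Matrix.diagonal_mul_diagonal]
    have : (fun i => (c i)⁻¹ * c i) = fun _ => (1:ℝ) := by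
      funext i; exact inv_mul_cancel₀ (hcne i)
    rw [this, Matrix.diagonal_one]
  have hstarT : star U = U.transpose := by
    rw [← Matrix.conjTranspose_eq_transpose_of_trivial]; rfl
  have hM : s0.transpose * A * s0 = diagonal (fun i => if lam i = 0 then 0 else 1) := by
    rw [hs0, Matrix.transpose_mul, Matrix.diagonal_transpose, hspec, ← hstarT]
    calc diagonal c * star U * (U * diagonal lam * star U) * (U * diagonal c)
        = diagonal c * ((star U * U) * diagonal lam * (star U * U)) * diagonal c := by
          simp only [Matrix.mul_assoc]
      _ = diagonal c * diagonal lam * diagonal c := by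
          rw [hUU, Matrix.one_mul, Matrix.mul_one]
      _ = diagonal (fun i => c i * lam i * c i) := by
          rw [Matrix.diagonal_mul_diagonal, Matrix.diagonal_mul_diagonal]
      _ = diagonal (fun i => if lam i = 0 then 0 else 1) := by
          have : (fun i => c i * lam i * c i) = (fun i => if lam i = 0 then (0:ℝ) else 1) := by
            funext i
            by_cases h : lam i = 0
            · rw [if_pos h, h, mul_zero, zero_mul]
            · have hpos : 0 < lam i := lt_of_le_of_ne (hlam0 i) (Ne.symm h)
              have hsne : Real.sqrt (lam i) ≠ 0 := by positivity
              rw [if_neg h, hc]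
              simp only [if_neg h]
              rw [← Real.mul_self_sqrt (hlam0 i)]
              field_simp
              rw [Real.sqrt_sq (Real.sqrt_nonneg _)]
          rw [this]
  -- sort so nonzero eigenvalues come first
  set g : Fin N → ℝ := fun i => if lam i = 0 then 1 else 0 with hg
  set σ : Equiv.Perm (Fin N) := Tuple.sort g with hσ
  have hmono : Monotone (g ∘ σ) := Tuple.monotone_sort g
  obtain ⟨p, hpN, key⟩ : ∃ p : ℕ, p ≤ N ∧ ∀ i : Fin N, (lam (σ i) ≠ 0 ↔ (i : ℕ) < p) := by
    classical
    set F := Finset.univ.filter (fun i : Fin N => lam (σ i) = 0) with hF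
    by_cases hne : F.Nonempty
    · set i0 := F.min' hne with hi0
      have hi0F : i0 ∈ F := F.min'_mem hne
      have hi0lam : lam (σ i0) = 0 := (Finset.mem_filter.mp hi0F).2
      refine ⟨(i0 : ℕ), i0.2.le, fun i => ?_⟩
      constructor
      · intro h
        by_contra hlt
        push_neg at hlt
        have hle : i0 ≤ i := by rwa [Fin.le_def]
        have := hmono hle
        simp only [Function.comp_apply, hg] at this
        rw [if_pos hi0lam, if_neg h] at this
        linarith
      · intro hlt h
        have hiF : i ∈ F := by simp [hF, h]
        have := F.min'_le i hiF
        rw [← hi0, Fin.le_def] at this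
        omega
    · refine ⟨N, le_refl N, fun i => ?_⟩
      constructor
      · intro _; exact i.2
      · intro _ h
        exact hne ⟨i, by simp [hF, h]⟩
  refine ⟨s0.submatrix id σ, s0inv.submatrix (σ : Fin N → Fin N) id, ?_, ?_, p, hpN, ?_⟩
  · ext a b
    show (∑ cc, s0 a (σ cc) * s0inv (σ cc) b) = (1 : Matrix (Fin N) (Fin N) ℝ) a b
    rw [Equiv.sum_comp σ (fun cc => s0 a cc * s0inv cc b), ← Matrix.mul_apply, h1]
  · ext a b
    show (∑ cc, s0inv (σ a) cc * s0 cc (σ b)) = (1 : Matrix (Fin N) (Fin N) ℝ) a b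
    rw [← Matrix.mul_apply, h2]
    simp only [Matrix.one_apply, EmbeddingLike.apply_eq_iff_eq]
  · intro a b
    have e1 := entry3 (s0.submatrix id σ) A a b
    have e2 := entry3 s0 A (σ a) (σ b)
    simp only [Matrix.submatrix_apply, id_eq] at e1
    rw [e1, ← e2, hM]
    rw [Matrix.diagonal_apply]
    simp only [EmbeddingLike.apply_eq_iff_eq]
    by_cases hab : a = b
    · subst hab
      simp only [if_pos rfl, true_and]
      by_cases h : lam (σ a) = 0
      · have : ¬ ((a:ℕ) < p) := by
          intro hlt; exact ((key a).mpr hlt) h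
        simp [h, this]
      · have : (a:ℕ) < p := (key a).mp h
        simp [h, this]
    · simp [hab]
lemma outer_psd {N : ℕ} (v : Fin N → ℝ) :
    (Matrix.of fun a b => v a * v b : Matrix (Fin N) (Fin N) ℝ).PosSemidef := by
  rw [Matrix.posSemidef_iff_dotProduct_mulVec]
  constructor
  · ext a b; simp [Matrix.conjTranspose_apply, mul_comm]
  · intro u
    have : dotProduct (star u) ((Matrix.of fun a b => v a * v b) *ᵥ u)
        = (∑ a, v a * u a) * (∑ a, v a * u a) := by
      simp only [dotProduct, Matrix.mulVec, Matrix.of_apply, Finset.sum_mul,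
        Finset.mul_sum, star_trivial]
      rw [Finset.sum_comm]
      congr 1; ext a; congr 1; ext b; ring
    rw [this]; exact mul_self_nonneg _

lemma trace_mul_outer {N : ℕ} (M : Matrix (Fin N) (Fin N) ℝ) (v : Fin N → ℝ) :
    (M * (Matrix.of fun a b => v a * v b)).trace = dotProduct v (M *ᵥ v) := by
  simp [Matrix.trace, Matrix.diag, Matrix.mul_apply, dotProduct, Matrix.mulVec,
    Finset.mul_sum]
  congr 1; ext a; congr 1; ext b; ring

lemma lemB {n : ℕ} (m : ℕ) (hm : m ≤ n) (A : Matrix (Fin n) (Fin n) ℝ) (hsymm : A.IsSymm)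
    (hq : ∀ v : Fin n → ℝ, (∀ a : Fin n, (a : ℕ) < m → v a = 0) →
      0 ≤ dotProduct v (A *ᵥ v)) :
    ∃ s : Matrix (Fin n) (Fin n) ℝ, IsUnit s ∧
      (∀ a b : Fin n, ((a : ℕ) < m ∨ (b : ℕ) < m) → s a b = if a = b then 1 else 0) ∧
      ∃ q : ℕ, m + q ≤ n ∧ ∀ a b : Fin n, m ≤ (a : ℕ) → m ≤ (b : ℕ) →
        (s.transpose * A * s) a b = if a = b ∧ (a : ℕ) < m + q then 1 else 0 := by
  set B : Matrix (Fin (n - m)) (Fin (n - m)) ℝ :=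
    Matrix.of (fun i j => A ⟨m + (i : ℕ), by omega⟩ ⟨m + (j : ℕ), by omega⟩) with hB
  have hBpsd : B.PosSemidef := by
    rw [Matrix.posSemidef_iff_dotProduct_mulVec]
    constructor
    · ext i j
      have := congrFun (congrFun hsymm (⟨m + (i : ℕ), by omega⟩ : Fin n)) ⟨m + (j : ℕ), by omega⟩
      simp only [Matrix.transpose_apply] at this
      simpa [hB, Matrix.conjTranspose_apply] using this
    · intro u
      set v : Fin n → ℝ := fun a => if h2 : m ≤ (a : ℕ) then u ⟨(a : ℕ) - m, by omega⟩ else 0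
        with hv
      have hv0 : ∀ a : Fin n, (a : ℕ) < m → v a = 0 := by
        intro a ha
        simp only [hv]
        rw [dif_neg (by omega)]
      have hvem : ∀ i : Fin (n - m), v ⟨m + (i : ℕ), by omega⟩ = u i := by
        intro i
        simp only [hv]
        rw [dif_pos (by simp)]
        congr 1
        exact Fin.ext (by simp)
      have key : dotProduct v (A *ᵥ v) = dotProduct (star u) (B *ᵥ u) := by
        simp only [dotProduct, Matrix.mulVec, star_trivial]
        rw [sum_split m hm (fun a => v a * ∑ b, A a b * v b)]
        have hz : (∑ i : Fin m, v (Fin.castLE hm i) * ∑ b, A (Fin.castLE hm i) b * v b) = 0 := by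
          apply Finset.sum_eq_zero
          intro i _
          rw [hv0 _ (by simp), zero_mul]
        rw [hz, zero_add]
        apply Finset.sum_congr rfl
        intro i _
        rw [hvem i]
        congr 1
        rw [sum_split m hm (fun b => A ⟨m + (i : ℕ), by omega⟩ b * v b)]
        have hz2 : (∑ j : Fin m, A ⟨m + (i : ℕ), by omega⟩ (Fin.castLE hm j) * v (Fin.castLE hm j)) = 0 := by
          apply Finset.sum_eq_zero
          intro j _
          rw [hv0 _ (by simp), mul_zero]
        rw [hz2, zero_add]
        apply Finset.sum_congr rfl
        intro j _
        rw [hvem j]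
        rfl
      rw [← key]
      exact hq v hv0
  obtain ⟨t, tinv, ht1, ht2, q, hqN, hpat⟩ := diag_psd B hBpsd
  refine ⟨emb m n t, ?_, ?_, q, by omega, ?_⟩
  · exact ⟨⟨emb m n t, emb m n tinv,
      by rw [emb_mul hm, ht1, emb_one], by rw [emb_mul hm, ht2, emb_one]⟩, rfl⟩
  · intro a b hab
    by_cases ha : m ≤ (a : ℕ)
    · rw [emb_apply_mix _ _ _ ha (by omega), if_neg]
      intro h; subst h; omega
    · rw [emb_apply_low _ _ _ ha]
  · intro a b ha hb
    rw [entry3]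
    rw [sum_split m hm]
    have hz : (∑ c : Fin m, ∑ d, emb m n t (Fin.castLE hm c) a * (A (Fin.castLE hm c) d * emb m n t d b)) = 0 := by
      apply Finset.sum_eq_zero
      intro c _
      apply Finset.sum_eq_zero
      intro d _
      rw [emb_apply_low _ _ _ (by simp), if_neg, zero_mul]
      intro h
      have := congrArg Fin.val h
      simp only [Fin.coe_castLE] at this
      omega
    rw [hz, zero_add]
    have hstep : ∀ i : Fin (n - m),
        (∑ d, emb m n t (⟨m + (i : ℕ), by omega⟩ : Fin n) a * (A ⟨m + (i : ℕ), by omega⟩ d * emb m n t d b))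
        = ∑ j : Fin (n - m), t i ⟨(a : ℕ) - m, by omega⟩ * (B i j * t j ⟨(b : ℕ) - m, by omega⟩) := by
      intro i
      rw [sum_split m hm]
      have hz2 : (∑ j : Fin m, emb m n t (⟨m + (i : ℕ), by omega⟩ : Fin n) a *
          (A ⟨m + (i : ℕ), by omega⟩ (Fin.castLE hm j) * emb m n t (Fin.castLE hm j) b)) = 0 := by
        apply Finset.sum_eq_zero
        intro j _
        have hzero : emb m n t (Fin.castLE hm j) b = 0 := by
          rw [emb_apply_low _ _ _ (by simp), if_neg]
          intro h
          have := congrArg Fin.val h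
          simp only [Fin.coe_castLE] at this
          omega
        rw [hzero, mul_zero, mul_zero]
      rw [hz2, zero_add]
      apply Finset.sum_congr rfl
      intro j _
      have e1 : emb m n t (⟨m + (i : ℕ), by omega⟩ : Fin n) a = t i ⟨(a : ℕ) - m, by omega⟩ := by
        rw [emb_apply_high _ _ _ (by simp) ha]
        congr 1
        exact Fin.ext (by simp)
      have e2 : emb m n t (⟨m + (j : ℕ), by omega⟩ : Fin n) b = t j ⟨(b : ℕ) - m, by omega⟩ := by
        rw [emb_apply_high _ _ _ (by simp) hb]
        congr 1
        exact Fin.ext (by simp)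
      rw [e1, e2]
      rfl
    rw [Finset.sum_congr rfl fun i _ => hstep i, ← entry3 t B, hpat]
    by_cases hab : a = b
    · subst hab
      simp only [if_pos rfl, true_and, and_true, Fin.mk.injEq, if_pos rfl]
      by_cases hlt : (a : ℕ) - m < q
      · rw [if_pos (by simpa using hlt), if_pos (by omega)]
      · rw [if_neg (by simpa using hlt), if_neg (by omega)]
    · rw [if_neg, if_neg]
      · intro h; exact hab h.1
      · intro h
        apply hab
        have := congrArg Fin.val h.1
        simp only at this
        exact Fin.ext (by omega)

lemma lemC {n : ℕ} (m μ ρ : ℕ) (hμ : μ + ρ ≤ m) (s z : Matrix (Fin n) (Fin n) ℝ)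
    (hs : ∀ a b : Fin n, ((a : ℕ) < m ∨ (b : ℕ) < m) → s a b = if a = b then 1 else 0)
    (hz : ∀ c d : Fin n, μ ≤ (c : ℕ) → μ ≤ (d : ℕ) →
      z c d = if c = d ∧ (c : ℕ) < μ + ρ then 1 else 0)
    (a b : Fin n) (ha : μ ≤ (a : ℕ)) (hb : μ ≤ (b : ℕ)) :
    (s.transpose * z * s) a b = if a = b ∧ (a : ℕ) < μ + ρ then 1 else 0 := by
  rw [entry3]
  have inner : ∀ c : Fin n, (∑ d, s c a * (z c d * s d b))
      = if μ ≤ (c : ℕ) ∧ (c : ℕ) < μ + ρ then s c a * s c b else 0 := by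
    intro c
    by_cases hc : μ ≤ (c : ℕ)
    · have : ∀ d : Fin n, s c a * (z c d * s d b)
          = if d = c then (if (c : ℕ) < μ + ρ then s c a * s c b else 0) else 0 := by
        intro d
        by_cases hdc : d = c
        · subst hdc
          rw [if_pos rfl, hz d d hc hc]
          by_cases hlt : (d : ℕ) < μ + ρ
          · rw [if_pos ⟨rfl, hlt⟩, if_pos hlt, one_mul]
          · rw [if_neg (fun h => hlt h.2), if_neg hlt, zero_mul, mul_zero]
        · rw [if_neg hdc]
          by_cases hd : μ ≤ (d : ℕ)
          · rw [hz c d hc hd, if_neg (by tauto), zero_mul, mul_zero]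
          · rw [hs d b (Or.inl (by omega)), if_neg (by intro h; subst h; omega),
              mul_zero, mul_zero]
      rw [Finset.sum_congr rfl fun d _ => this d, Finset.sum_ite_eq' Finset.univ c]
      simp only [Finset.mem_univ, if_true]
      by_cases hlt : (c : ℕ) < μ + ρ
      · rw [if_pos hlt, if_pos ⟨hc, hlt⟩]
      · rw [if_neg hlt, if_neg (by tauto)]
    · rw [if_neg (by tauto)]
      apply Finset.sum_eq_zero
      intro d _
      rw [hs c a (Or.inl (by omega)), if_neg (by intro h; subst h; omega), zero_mul]
  rw [Finset.sum_congr rfl fun c _ => inner c]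
  have outer : ∀ c : Fin n, (if μ ≤ (c : ℕ) ∧ (c : ℕ) < μ + ρ then s c a * s c b else 0)
      = if c = a then (if a = b ∧ (a : ℕ) < μ + ρ then 1 else 0) else 0 := by
    intro c
    by_cases hca : c = a
    · subst hca
      by_cases hrange : μ ≤ (c : ℕ) ∧ (c : ℕ) < μ + ρ
      · rw [if_pos hrange, if_pos rfl, hs c c (Or.inl (by omega)), if_pos rfl,
          hs c b (Or.inl (by omega))]
        by_cases hcb : c = b
        · rw [if_pos hcb, if_pos ⟨hcb, hrange.2⟩, one_mul]
        · rw [if_neg hcb, if_neg (by tauto), one_mul]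
      · rw [if_neg hrange, if_pos rfl, if_neg]
        intro h
        exact hrange ⟨ha, h.2⟩
    · rw [if_neg hca]
      by_cases hrange : μ ≤ (c : ℕ) ∧ (c : ℕ) < μ + ρ
      · rw [if_pos hrange, hs c a (Or.inl (by omega)), if_neg hca, zero_mul]
      · rw [if_neg hrange]
  rw [Finset.sum_congr rfl fun c _ => outer c, Finset.sum_ite_eq' Finset.univ a]
  simp only [Finset.mem_univ, if_true]

/-- Membership in the order-`k` facial reduction cone of the psd cone `S^n_+`,
with the trace inner product: each `y i` is symmetric, and `y i` lies in the dual
(within symmetric matrices) of `S^n_+ ∩ y_1^⊥ ∩ ... ∩ y_{i-1}^⊥`. -/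
def frSeqM {n k : ℕ} (y : Fin k → Matrix (Fin n) (Fin n) ℝ) : Prop :=
  (∀ i, (y i).IsSymm) ∧
  ∀ i : Fin k, ∀ x : Matrix (Fin n) (Fin n) ℝ, x.PosSemidef →
    (∀ j : Fin k, j < i → (y j * x).trace = 0) → 0 ≤ (y i * x).trace

/-- Any facial reduction sequence for `S^n_+` can be rotated by a congruence
`y ↦ tᵀ y t` (with `t` invertible) into a regularized facial reduction sequence. -/
theorem stmt_11 (n k : ℕ) (y : Fin k → Matrix (Fin n) (Fin n) ℝ) (hy : frSeqM y) :
    ∃ t : Matrix (Fin n) (Fin n) ℝ, IsUnit t ∧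
      ∃ p : Fin k → ℕ, (∑ i, p i) ≤ n ∧
        ∀ i : Fin k, ∀ a b : Fin n,
          (∑ j ∈ Finset.Iio i, p j) ≤ (a : ℕ) → (∑ j ∈ Finset.Iio i, p j) ≤ (b : ℕ) →
          (t.transpose * y i * t) a b =
            if a = b ∧ (a : ℕ) < (∑ j ∈ Finset.Iio i, p j) + p i then 1 else 0 := by
  obtain ⟨hsym, hdual⟩ := hy
  have main : ∀ N : ℕ, N ≤ k → ∃ t : Matrix (Fin n) (Fin n) ℝ, IsUnit t ∧
      ∃ p : Fin k → ℕ, (∀ j : Fin k, N ≤ (j : ℕ) → p j = 0) ∧ (∑ i, p i) ≤ n ∧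
        ∀ i : Fin k, (i : ℕ) < N → ∀ a b : Fin n,
          (∑ j ∈ Finset.Iio i, p j) ≤ (a : ℕ) → (∑ j ∈ Finset.Iio i, p j) ≤ (b : ℕ) →
          (t.transpose * y i * t) a b =
            if a = b ∧ (a : ℕ) < (∑ j ∈ Finset.Iio i, p j) + p i then 1 else 0 := by
    intro N
    induction N with
    | zero =>
      exact fun _ => ⟨1, isUnit_one, fun _ => 0, fun _ _ => rfl, by simp,
        fun i hi => absurd hi (by omega)⟩
    | succ N ih =>
      intro hNk
      obtain ⟨t, htu, p, hp0, hpn, hpat⟩ := ih (by omega)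
      set iN : Fin k := ⟨N, by omega⟩ with hiN
      set m : ℕ := ∑ j ∈ Finset.Iio iN, p j with hm
      have hmn : m ≤ n := by
        refine le_trans ?_ hpn
        exact Finset.sum_le_sum_of_subset (Finset.subset_univ _)
      have hμj : ∀ j : Fin k, j < iN → (∑ l ∈ Finset.Iio j, p l) + p j ≤ m := by
        intro j hj
        rw [hm, add_comm, ← Finset.sum_insert (by simp : j ∉ Finset.Iio j)]
        apply Finset.sum_le_sum_of_subset
        intro c hc
        rw [Finset.mem_insert] at hc
        rw [Finset.mem_Iio]
        rcases hc with h | h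
        · exact h ▸ hj
        · exact lt_trans (Finset.mem_Iio.mp h) hj
      have hsym' : (t.transpose * y iN * t).IsSymm := by
        unfold Matrix.IsSymm
        rw [Matrix.transpose_mul, Matrix.transpose_mul, Matrix.transpose_transpose,
          (hsym iN).eq, Matrix.mul_assoc]
      have hdot : ∀ M : Matrix (Fin n) (Fin n) ℝ, ∀ v : Fin n → ℝ,
          dotProduct v ((t.transpose * M * t) *ᵥ v)
            = dotProduct (t *ᵥ v) (M *ᵥ (t *ᵥ v)) := by
        intro M v
        rw [← Matrix.mulVec_mulVec, ← Matrix.mulVec_mulVec, Matrix.dotProduct_mulVec,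
          Matrix.vecMul_transpose]
      have hquad : ∀ v : Fin n → ℝ, (∀ a : Fin n, (a : ℕ) < m → v a = 0) →
          0 ≤ dotProduct v ((t.transpose * y iN * t) *ᵥ v) := by
        intro v hv
        rw [hdot]
        set w := t *ᵥ v with hw
        have := hdual iN (Matrix.of fun a b => w a * w b) (outer_psd w) ?_
        · rwa [trace_mul_outer] at this
        · intro j hj
          rw [trace_mul_outer, hw, ← hdot (y j) v]
          simp only [dotProduct, Matrix.mulVec]
          apply Finset.sum_eq_zero
          intro a _
          by_cases ha : (a : ℕ) < m
          · rw [hv a ha, zero_mul]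
          · have hinner : (∑ b, (t.transpose * y j * t) a b * v b) = 0 := by
              apply Finset.sum_eq_zero
              intro b _
              by_cases hb : (b : ℕ) < m
              · rw [hv b hb, mul_zero]
              · have hjm := hμj j hj
                have hjN : (j : ℕ) < N := hj
                rw [hpat j hjN a b (by omega) (by omega), if_neg, zero_mul]
                rintro ⟨-, h2⟩
                omega
            rw [hinner, mul_zero]
      obtain ⟨s, hsu, hsid, q, hqn, hspat⟩ := lemB m hmn (t.transpose * y iN * t) hsym' hquad
      have hconj : ∀ M : Matrix (Fin n) (Fin n) ℝ,
          (t * s).transpose * M * (t * s) = s.transpose * (t.transpose * M * t) * s := by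
        intro M
        rw [Matrix.transpose_mul]
        simp only [Matrix.mul_assoc]
      refine ⟨t * s, htu.mul hsu, Function.update p iN q, ?_, ?_, ?_⟩
      · intro j hj
        rw [Function.update_of_ne (by
          intro h; have := congrArg Fin.val h; simp only [hiN] at this; omega)]
        exact hp0 j (by omega)
      · rw [Finset.sum_update_of_mem (Finset.mem_univ iN)]
        have : ∑ j ∈ Finset.univ \ {iN}, p j = m := by
          rw [hm]
          symm
          apply Finset.sum_subset
          · intro c hc
            rw [Finset.mem_sdiff, Finset.mem_singleton]
            refine ⟨Finset.mem_univ _, ?_⟩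
            intro h
            subst h
            exact absurd (Finset.mem_Iio.mp hc) (lt_irrefl _)
          · intro c _ hc
            rw [Finset.mem_Iio] at hc
            exact hp0 c (Fin.le_def.mp (not_lt.mp hc))
        rw [this]
        omega
      · intro i hi a b ha hb
        have hμeq : ∑ j ∈ Finset.Iio i, Function.update p iN q j = ∑ j ∈ Finset.Iio i, p j := by
          apply Finset.sum_congr rfl
          intro j hj
          rw [Finset.mem_Iio] at hj
          apply Function.update_of_ne
          intro h
          have := congrArg Fin.val h
          simp only [hiN] at this
          have hji : j < i := hj
          omega
        rw [hμeq] at ha hb ⊢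
        by_cases hiNi : i = iN
        · rw [hiNi] at ha hb ⊢
          rw [Function.update_self]
          have hmi : ∑ j ∈ Finset.Iio iN, p j = m := hm.symm
          rw [hmi] at ha hb ⊢
          rw [hconj]
          exact hspat a b ha hb
        · have hiN' : (i : ℕ) < N := by
            have : (i : ℕ) ≠ N := by
              intro h; exact hiNi (Fin.ext (by simp [hiN, h]))
            omega
          rw [Function.update_of_ne hiNi, hconj]
          exact lemC m (∑ j ∈ Finset.Iio i, p j) (p i) (hμj i hiN') s
            (t.transpose * y i * t) hsid (hpat i hiN') a b ha hb
  obtain ⟨t, htu, p, _, hpn, hpat⟩ := main k (le_refl k)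
  exact ⟨t, htu, p, hpn, fun i => hpat i i.2⟩
end

section
/- Let A* : S^3 → ℝ^3 be given by A*y = (a_1 • y, a_2 • y, a_3 • y), where a_1 = E_{11}, a_2 = E_{13}+E_{31}+E_{22}, a_3 = E_{11}+E_{22}. Then the closure of A*(S^3_+) equals { (α,β,γ) : γ ≥ α ≥ 0 }, and the frontier cl(A* S^3_+) \ A* S^3_+ equals { (0,β,γ) : γ ≥ 0, β ≠ γ }. In particular A*(S^3_+) is not closed. -/
open Matrix

/-- For `a₁ = E₁₁`, `a₂ = E₁₃+E₃₁+E₂₂`, `a₃ = E₁₁+E₂₂`, the image `A* S³₊` has closure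
`{(α,β,γ) : γ ≥ α ≥ 0}` and frontier `{(0,β,γ) : γ ≥ 0, β ≠ γ}`; in particular it is
not closed. -/
theorem stmt_13 (a₁ a₂ a₃ : Matrix (Fin 3) (Fin 3) ℝ)
    (ha₁ : a₁ = !![1, 0, 0; 0, 0, 0; 0, 0, 0])
    (ha₂ : a₂ = !![0, 0, 1; 0, 1, 0; 1, 0, 0])
    (ha₃ : a₃ = !![1, 0, 0; 0, 1, 0; 0, 0, 0])
    (img : Set (Fin 3 → ℝ))
    (himg : img = {v | ∃ y : Matrix (Fin 3) (Fin 3) ℝ, y.PosSemidef ∧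
        v = ![(a₁ * y).trace, (a₂ * y).trace, (a₃ * y).trace]}) :
    closure img = {v | 0 ≤ v 0 ∧ v 0 ≤ v 2} ∧
    closure img \ img = {v | v 0 = 0 ∧ 0 ≤ v 2 ∧ v 1 ≠ v 2} ∧
    ¬ IsClosed img := by
  subst ha₁ ha₂ ha₃
  -- trace computations
  have htr1 : ∀ y : Matrix (Fin 3) (Fin 3) ℝ,
      ((!![(1:ℝ),0,0;0,0,0;0,0,0]) * y).trace = y 0 0 := by
    intro y
    rw [Matrix.trace_fin_three]
    simp [Matrix.mul_apply, Fin.sum_univ_three, Matrix.vecHead, Matrix.vecTail]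
  have htr2 : ∀ y : Matrix (Fin 3) (Fin 3) ℝ,
      ((!![(0:ℝ),0,1;0,1,0;1,0,0]) * y).trace = y 2 0 + y 1 1 + y 0 2 := by
    intro y
    rw [Matrix.trace_fin_three]
    simp [Matrix.mul_apply, Fin.sum_univ_three, Matrix.vecHead, Matrix.vecTail]
  have htr3 : ∀ y : Matrix (Fin 3) (Fin 3) ℝ,
      ((!![(1:ℝ),0,0;0,1,0;0,0,0]) * y).trace = y 0 0 + y 1 1 := by
    intro y
    rw [Matrix.trace_fin_three]
    simp [Matrix.mul_apply, Fin.sum_univ_three, Matrix.vecHead, Matrix.vecTail]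
  -- characterization of the image
  have hset : img = {v : Fin 3 → ℝ |
      (0 < v 0 ∧ v 0 ≤ v 2) ∨ (v 0 = 0 ∧ 0 ≤ v 2 ∧ v 1 = v 2)} := by
    rw [himg]
    ext v
    simp only [Set.mem_setOf_eq]
    constructor
    · rintro ⟨y, hy, rfl⟩
      simp only [htr1, htr2, htr3, Matrix.cons_val_zero, Matrix.cons_val_one,
        Matrix.head_cons, Matrix.cons_val_two, Matrix.tail_cons]
      have h00 : 0 ≤ y 0 0 := by
        have := hy.dotProduct_mulVec_nonneg ![1,0,0]
        simpa [mulVec, dotProduct, Fin.sum_univ_three] using this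
      have h11 : 0 ≤ y 1 1 := by
        have := hy.dotProduct_mulVec_nonneg ![0,1,0]
        simpa [mulVec, dotProduct, Fin.sum_univ_three] using this
      have hsym : y 2 0 = y 0 2 := by
        have := congrFun (congrFun hy.1 0) 2
        simpa [Matrix.conjTranspose_apply] using this
      rcases eq_or_lt_of_le h00 with h0 | h0
      · right
        have hz : y 0 2 = 0 := by
          have key : ∀ t : ℝ, 0 ≤ 2 * t * y 0 2 + y 2 2 := by
            intro t
            have h := hy.dotProduct_mulVec_nonneg ![t,0,1]
            simp [mulVec, dotProduct, Fin.sum_univ_three] at h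
            rw [← h0, hsym] at h
            ring_nf at h ⊢
            linarith
          by_contra hne
          have h := key ((-(y 2 2) - 1)/(2 * y 0 2))
          have h2 : 2 * ((-(y 2 2) - 1)/(2 * y 0 2)) * y 0 2 = -(y 2 2) - 1 := by
            field_simp
          rw [h2] at h
          linarith
        refine ⟨h0.symm, by linarith, by rw [hsym, hz, ← h0]; ring⟩
      · exact Or.inl ⟨h0, by linarith⟩
    · rintro (⟨h0, h02⟩ | ⟨h0, h2, h12⟩)
      · set t := (v 1 - (v 2 - v 0))/2 with ht
        refine ⟨!![v 0, 0, t; 0, v 2 - v 0, 0; t, 0, t^2 / v 0], Matrix.PosSemidef.of_dotProduct_mulVec_nonneg ?_ ?_, ?_⟩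
        · ext i j
          fin_cases i <;> fin_cases j <;>
            simp [Matrix.conjTranspose_apply, Matrix.vecHead, Matrix.vecTail]
        · intro x
          have key : star x ⬝ᵥ
              (!![v 0, 0, t; 0, v 2 - v 0, 0; t, 0, t^2 / v 0] : Matrix (Fin 3) (Fin 3) ℝ) *ᵥ x
              = (v 0 * x 0 + t * x 2)^2 / v 0 + (v 2 - v 0) * (x 1)^2 := by
            simp [mulVec, dotProduct, Fin.sum_univ_three, Matrix.vecHead, Matrix.vecTail]
            field_simp
            ring
          rw [key]
          exact add_nonneg (div_nonneg (sq_nonneg _) h0.le)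
            (mul_nonneg (by linarith) (sq_nonneg _))
        · rw [htr1, htr2, htr3]
          funext i
          fin_cases i
          · simp [Matrix.vecHead, Matrix.vecTail]
          · simp [Matrix.vecHead, Matrix.vecTail]
            rw [ht]; ring
          · simp [Matrix.vecHead, Matrix.vecTail]
            try ring
      · refine ⟨!![0, 0, 0; 0, v 2, 0; 0, 0, 0], Matrix.PosSemidef.of_dotProduct_mulVec_nonneg ?_ ?_, ?_⟩
        · ext i j
          fin_cases i <;> fin_cases j <;>
            simp [Matrix.conjTranspose_apply, Matrix.vecHead, Matrix.vecTail]
        · intro x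
          have key : star x ⬝ᵥ
              (!![(0:ℝ), 0, 0; 0, v 2, 0; 0, 0, 0] : Matrix (Fin 3) (Fin 3) ℝ) *ᵥ x
              = v 2 * (x 1)^2 := by
            simp [mulVec, dotProduct, Fin.sum_univ_three, Matrix.vecHead, Matrix.vecTail]
            ring
          rw [key]
          exact mul_nonneg h2 (sq_nonneg _)
        · rw [htr1, htr2, htr3]
          funext i
          fin_cases i <;> simp [Matrix.vecHead, Matrix.vecTail, h0, h12]
  -- the closure
  have hCclosed : IsClosed {v : Fin 3 → ℝ | 0 ≤ v 0 ∧ v 0 ≤ v 2} := by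
    have : {v : Fin 3 → ℝ | 0 ≤ v 0 ∧ v 0 ≤ v 2}
        = {v : Fin 3 → ℝ | 0 ≤ v 0} ∩ {v : Fin 3 → ℝ | v 0 ≤ v 2} := rfl
    rw [this]
    exact (isClosed_le continuous_const (continuous_apply 0)).inter
      (isClosed_le (continuous_apply 0) (continuous_apply 2))
  have hclos : closure img = {v : Fin 3 → ℝ | 0 ≤ v 0 ∧ v 0 ≤ v 2} := by
    apply le_antisymm
    · apply closure_minimal _ hCclosed
      rw [hset]
      rintro v (⟨h0, h02⟩ | ⟨h0, h2, h12⟩)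
      · exact ⟨h0.le, h02⟩
      · exact ⟨h0.symm.le, by rw [h0]; exact h2⟩
    · intro v hv
      obtain ⟨h0, h02⟩ := hv
      have ht : Filter.Tendsto (fun n : ℕ => v + (1/(n+1):ℝ) • ![1,0,1])
          Filter.atTop (nhds v) := by
        have h := (tendsto_one_div_add_atTop_nhds_zero_nat (𝕜 := ℝ)).smul_const (![1,0,1] : Fin 3 → ℝ)
        have h2 := h.const_add v
        simpa using h2
      refine mem_closure_of_tendsto ht (Filter.Eventually.of_forall fun n => ?_)
      rw [hset]
      left
      have hpos : (0:ℝ) < 1/((n:ℝ)+1) := by positivity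
      constructor
      · show 0 < v 0 + (1/((n:ℝ)+1)) * (![(1:ℝ),0,1] 0)
        simp only [Matrix.cons_val_zero, mul_one]
        linarith
      · show v 0 + (1/((n:ℝ)+1)) * (![(1:ℝ),0,1] 0) ≤ v 2 + (1/((n:ℝ)+1)) * (![(1:ℝ),0,1] 2)
        simp only [Matrix.cons_val_zero, Matrix.cons_val_two, Matrix.tail_cons,
          Matrix.head_cons, mul_one]
        linarith
  refine ⟨hclos, ?_, ?_⟩
  · rw [hclos, hset]
    ext v
    simp only [Set.mem_diff, Set.mem_setOf_eq]
    constructor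
    · rintro ⟨⟨h0, h02⟩, hn⟩
      rcases eq_or_lt_of_le h0 with hz | hz
      · refine ⟨hz.symm, by rw [← hz] at h02; exact h02, fun h12 => hn (Or.inr ⟨hz.symm, by rw [← hz] at h02; exact h02, h12⟩)⟩
      · exact absurd (Or.inl ⟨hz, h02⟩) hn
    · rintro ⟨hz, h2, hne⟩
      refine ⟨⟨hz.symm.le, by rw [hz]; exact h2⟩, ?_⟩
      rintro (⟨h, _⟩ | ⟨_, _, h⟩)
      · rw [hz] at h; exact lt_irrefl 0 h
      · exact hne h
  · intro hcl
    have hp : (![0,1,0] : Fin 3 → ℝ) ∈ closure img := by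
      rw [hclos]
      constructor <;> simp
    rw [hcl.closure_eq, hset] at hp
    rcases hp with ⟨h, _⟩ | ⟨_, _, h⟩
    · simp at h
    · simp at h
end

section
/- Let K be a closed convex cone and A : ℝ^m → Y a linear map. Suppose there exist (a_1,…,a_{k+1}) ∈ FR_{k+1}(K*) with k ≥ 1 and (y_1,…,y_{ℓ+1}) ∈ FR_{ℓ+1}(K) with ℓ ≥ 1 such that a_i ∈ range(A) for all i = 1,…,k+1, y_j ∈ ker(A*) for j = 1,…,ℓ, ⟨a_i, y_{ℓ+1}⟩ = 0 for i ≤ k and ⟨a_{k+1}, y_{ℓ+1}⟩ = −1. Then the set A* K* = { A* y : y ∈ K* } is not closed. -/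
open scoped RealInnerProductSpace

variable {Y : Type*} [NormedAddCommGroup Y] [InnerProductSpace ℝ Y] [FiniteDimensional ℝ Y]

lemma mem_dualSet {T : Set Y} {v : Y} : v ∈ dualSet T ↔ ∀ x ∈ T, 0 ≤ ⟪x, v⟫ := Iff.rfl

lemma dualSet_eq_innerDualCone (T : Set Y) : dualSet T = ↑(ProperCone.innerDual T) := rfl

/-- Bipolar theorem at the level of sets. -/
lemma dualSet_dualSet (S : Set Y) (h0 : (0 : Y) ∈ S) (hconv : Convex ℝ S)
    (hcone : ∀ c : ℝ, 0 ≤ c → ∀ x ∈ S, c • x ∈ S) (hcl : IsClosed S) :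
    dualSet (dualSet S) = S := by
  let C : ConvexCone ℝ Y :=
    { carrier := S
      smul_mem' := fun {c} hc {x} hx => hcone c hc.le x hx
      add_mem' := fun {x} hx {y} hy => by
        have h := hconv hx hy (by norm_num : (0:ℝ) ≤ 1/2) (by norm_num : (0:ℝ) ≤ 1/2)
          (by norm_num)
        have h2 := hcone 2 (by norm_num) _ h
        have : (2 : ℝ) • ((1/2 : ℝ) • x + (1/2 : ℝ) • y) = x + y := by
          rw [smul_add, smul_smul, smul_smul]; norm_num
        rwa [this] at h2 }
  let P : ProperCone ℝ Y := { toSubmodule := C.toPointedCone h0, isClosed' := hcl }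
  have h := ProperCone.innerDual_innerDual P
  have h' : ((ProperCone.innerDual ((ProperCone.innerDual (P : Set Y)) : Set Y)) : Set Y) =
      (P : Set Y) :=
    congrArg (fun D : ProperCone ℝ Y => (D : Set Y)) h
  exact h'

lemma dualSet_closure (S : Set Y) : dualSet (closure S) = dualSet S := by
  ext v
  constructor
  · exact fun h x hx => h x (subset_closure hx)
  · intro h x hx
    have hcl : IsClosed {w : Y | 0 ≤ ⟪w, v⟫} :=
      isClosed_le continuous_const (continuous_id.inner continuous_const)
    exact hcl.closure_subset_iff.2 (fun w hw => h w hw) hx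

/-- Sufficient condition for non-closedness of `A* K*`: the existence of suitable facial
reduction sequences in `FR_{k+1}(K*)` and `FR_{l+1}(K)`. -/
theorem stmt_14 (K : Set Y) (hKcl : IsClosed K) (hKconv : Convex ℝ K)
    (hKcone : ∀ c : ℝ, 0 ≤ c → ∀ x ∈ K, c • x ∈ K) (hK0 : (0 : Y) ∈ K)
    (m k l : ℕ) (hk : 1 ≤ k) (hl : 1 ≤ l)
    (A : EuclideanSpace ℝ (Fin m) →L[ℝ] Y)
    (a : Fin (k + 1) → Y) (y : Fin (l + 1) → Y)
    (ha : IsFRSeq (dualSet K) a) (hy : IsFRSeq K y)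
    (haR : ∀ i, a i ∈ Set.range A)
    (hyN : ∀ j : Fin (l + 1), (j : ℕ) < l → ContinuousLinearMap.adjoint A (y j) = 0)
    (hzero : ∀ i : Fin (k + 1), (i : ℕ) < k → ⟪a i, y (Fin.last l)⟫ = 0)
    (hone : ⟪a (Fin.last k), y (Fin.last l)⟫ = -1) :
    ¬ IsClosed {v : EuclideanSpace ℝ (Fin m) |
        ∃ u ∈ dualSet K, v = ContinuousLinearMap.adjoint A u} := by
  intro hclosed
  set A' := ContinuousLinearMap.adjoint A with hA'
  set z := y (Fin.last l) with hz
  set T : Set (EuclideanSpace ℝ (Fin m)) := {v | ∃ u ∈ dualSet K, v = A' u} with hT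
  -- the span of the first `l` vectors `y j`
  set G : Set Y := {v | ∃ j : Fin (l + 1), (j : ℕ) < l ∧ v = y j} with hG
  set V : Submodule ℝ Y := Submodule.span ℝ G with hV
  -- A' vanishes on V
  have hAV : ∀ w ∈ V, A' w = 0 := by
    intro w hw
    induction hw using Submodule.span_induction with
    | mem v hv => obtain ⟨j, hj, rfl⟩ := hv; exact hyN j hj
    | zero => simp
    | add v w _ _ hv hw => simp [map_add, hv, hw]
    | smul c v _ hv => simp [map_smul, hv]
  -- the sum cone S = K* + V
  set S : Set Y := {s | ∃ u ∈ dualSet K, ∃ w ∈ (V : Set Y), s = u + w} with hS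
  have h0K : (0 : Y) ∈ dualSet K := by
    intro x hx; simp
  have h0S : (0 : Y) ∈ S := ⟨0, h0K, 0, V.zero_mem, by simp⟩
  -- S is a convex cone
  have hSconv : Convex ℝ S := by
    rintro s1 ⟨u1, hu1, w1, hw1, rfl⟩ s2 ⟨u2, hu2, w2, hw2, rfl⟩ c d hc hd hcd
    refine ⟨c • u1 + d • u2, ?_, c • w1 + d • w2, ?_, by module⟩
    · intro x hx
      have i1 := hu1 x hx
      have i2 := hu2 x hx
      rw [inner_add_right, real_inner_smul_right, real_inner_smul_right]
      positivity
    · exact V.add_mem (V.smul_mem c hw1) (V.smul_mem d hw2)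
  have hScone : ∀ c : ℝ, 0 ≤ c → ∀ s ∈ S, c • s ∈ S := by
    rintro c hc s ⟨u, hu, w, hw, rfl⟩
    refine ⟨c • u, ?_, c • w, V.smul_mem c hw, by rw [smul_add]⟩
    intro x hx
    rw [real_inner_smul_right]
    exact mul_nonneg hc (hu x hx)
  -- dual of S is K ∩ V^⊥, which equals frCut K y (last l)
  have hKd : dualSet (dualSet K) = K := dualSet_dualSet K hK0 hKconv hKcone hKcl
  have hdualS : dualSet S = frCut K y (Fin.last l) := by
    ext x
    constructor
    · intro hx
      constructor
      · rw [← hKd]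
        intro u hu
        have := hx (u + 0) ⟨u, hu, 0, V.zero_mem, rfl⟩
        simpa using this
      · intro j hj
        have hjl : (j : ℕ) < l := by simpa [Fin.lt_def] using hj
        have hyj : y j ∈ (V : Set Y) := Submodule.subset_span ⟨j, hjl, rfl⟩
        have h1 := hx (0 + y j) ⟨0, h0K, y j, hyj, rfl⟩
        have h2 := hx (0 + (-(y j))) ⟨0, h0K, -(y j), V.neg_mem hyj, rfl⟩
        simp only [zero_add, inner_neg_left] at h1 h2
        linarith
    · rintro ⟨hxK, hxperp⟩ s ⟨u, hu, w, hw, rfl⟩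
      have hwx : ⟪w, x⟫ = 0 := by
        induction hw using Submodule.span_induction with
        | mem v hv =>
          obtain ⟨j, hj, rfl⟩ := hv
          exact hxperp j (by simpa [Fin.lt_def] using hj)
        | zero => simp
        | add v w _ _ hv hw => rw [inner_add_left, hv, hw]; ring
        | smul c v _ hv => rw [real_inner_smul_left, hv]; ring
      have hux : 0 ≤ ⟪u, x⟫ := by
        rw [real_inner_comm]; exact hu x hxK
      rw [inner_add_left, hwx, add_zero]
      exact hux
  -- bipolar: z ∈ closure S
  have hclS : dualSet (dualSet (closure S)) = closure S :=
    dualSet_dualSet (closure S) (subset_closure h0S) hSconv.closure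
      (fun c hc x hx => map_mem_closure (continuous_const_smul c) hx
        (fun s hs => hScone c hc s hs)) isClosed_closure
  have hzS : z ∈ closure S := by
    have hyl := hy (Fin.last l)
    rw [← hclS]
    rw [dualSet_closure, hdualS]
    exact hyl
  -- A' z belongs to the closure of T
  have hcT : A' z ∈ closure T := by
    refine map_mem_closure A'.continuous hzS ?_
    rintro s ⟨u, hu, w, hw, rfl⟩
    refine ⟨u, hu, ?_⟩
    rw [map_add, hAV w hw, add_zero]
  rw [hclosed.closure_eq] at hcT
  obtain ⟨u, hu, huz⟩ := hcT
  -- inner products of u against the a i agree with those of z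
  have hinner : ∀ i : Fin (k + 1), ⟪a i, u⟫ = ⟪a i, z⟫ := by
    intro i
    obtain ⟨x, hx⟩ := haR i
    have h1 : ⟪A' u, x⟫ = ⟪u, A x⟫ := ContinuousLinearMap.adjoint_inner_left A x u
    have h2 : ⟪A' z, x⟫ = ⟪z, A x⟫ := ContinuousLinearMap.adjoint_inner_left A x z
    rw [huz] at h2
    rw [h2] at h1
    rw [← hx]
    linarith [real_inner_comm (A x) u, real_inner_comm (A x) z, h1]
  -- u lies in the last cut of the FR sequence for K*
  have humem : u ∈ frCut (dualSet K) a (Fin.last k) := by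
    refine ⟨hu, fun j hj => ?_⟩
    have hjk : (j : ℕ) < k := by simpa [Fin.lt_def] using hj
    rw [hinner j]
    exact hzero j hjk
  have hpos := ha (Fin.last k) u humem
  rw [real_inner_comm, hinner (Fin.last k), hone] at hpos
  linarith
end

section
/- Let K be a closed convex cone, T an invertible linear map on Y, and S ⊆ Y any subset. Then: (i) T^{-1}(S*) = (T* S)*, where S* = { y : ⟨y,x⟩ ≥ 0 ∀ x ∈ S }; (ii) T^{-1}(S^⊥) = (T* S)^⊥; and (iii) if additionally T(K) = K, then T*((K ∩ S^⊥)*) = (K ∩ (T* S)^⊥)*. -/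
open scoped RealInnerProductSpace

variable {Y : Type*} [NormedAddCommGroup Y] [InnerProductSpace ℝ Y] [FiniteDimensional ℝ Y]

/-- For an invertible linear map `T` and any set `S`:
(i) the preimage of `S*` under `T` equals `(T* S)*`;
(ii) the preimage of the orthogonal complement of `S` under `T` equals `(T* S)^⊥`;
(iii) if moreover `T(K) = K`, then `T*((K ∩ S^⊥)*) = (K ∩ (T* S)^⊥)*`. -/
theorem stmt_15 (K : Set Y) (hKcl : IsClosed K) (hKconv : Convex ℝ K)
    (hKcone : ∀ c : ℝ, 0 ≤ c → ∀ x ∈ K, c • x ∈ K) (hK0 : (0 : Y) ∈ K)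
    (T : Y →L[ℝ] Y) (hT : Function.Bijective T) (S : Set Y) :
    T ⁻¹' (dualSet S) = dualSet (ContinuousLinearMap.adjoint T '' S) ∧
    T ⁻¹' (perpSet S) = perpSet (ContinuousLinearMap.adjoint T '' S) ∧
    (T '' K = K →
      ContinuousLinearMap.adjoint T '' (dualSet (K ∩ perpSet S)) =
        dualSet (K ∩ perpSet (ContinuousLinearMap.adjoint T '' S))) := by

  set T' := ContinuousLinearMap.adjoint T with hT'def
  have hadj : ∀ x y : Y, ⟪T' x, y⟫ = ⟪x, T y⟫ := fun x y =>
    ContinuousLinearMap.adjoint_inner_left T y x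
  have h1 : T ⁻¹' (dualSet S) = dualSet (T' '' S) := by
    ext y; constructor
    · rintro hy _ ⟨x, hx, rfl⟩
      rw [hadj]; exact hy x hx
    · intro hy x hx
      have := hy (T' x) ⟨x, hx, rfl⟩
      rwa [hadj] at this
  have h2 : T ⁻¹' (perpSet S) = perpSet (T' '' S) := by
    ext y; constructor
    · rintro hy _ ⟨x, hx, rfl⟩
      rw [hadj]; exact hy x hx
    · intro hy x hx
      have := hy (T' x) ⟨x, hx, rfl⟩
      rwa [hadj] at this
  refine ⟨h1, h2, fun hK => ?_⟩
  have hKpre : T ⁻¹' K = K := by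
    conv_lhs => rw [← hK]
    exact Set.preimage_image_eq K hT.injective
  have hsurj : Function.Surjective T' := by
    have hinj : Function.Injective T' := by
      intro u v huv
      have h0 : ∀ y : Y, ⟪u - v, T y⟫ = 0 := by
        intro y
        rw [← hadj]
        simp [map_sub, huv, inner_sub_left]
      obtain ⟨y, hy⟩ := hT.surjective (u - v)
      have := h0 y
      rw [hy, inner_self_eq_zero] at this
      exact sub_eq_zero.mp this
    exact (LinearMap.injective_iff_surjective (f := (T' : Y →ₗ[ℝ] Y))).mp hinj
  have hset : K ∩ perpSet (T' '' S) = T ⁻¹' (K ∩ perpSet S) := by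
    rw [Set.preimage_inter, hKpre, h2]
  rw [hset]
  ext z
  constructor
  · rintro ⟨w, hw, rfl⟩ y hy
    have : (0:ℝ) ≤ ⟪T y, w⟫ := hw (T y) hy
    rwa [real_inner_comm, ← hadj, real_inner_comm] at this
  · intro hz
    obtain ⟨w, rfl⟩ := hsurj z
    refine ⟨w, fun x hx => ?_, rfl⟩
    obtain ⟨y, rfl⟩ := hT.surjective x
    have : (0:ℝ) ≤ ⟪y, T' w⟫ := hz y hx
    rwa [real_inner_comm, hadj, real_inner_comm] at this
end

section
/- Let K be a closed convex cone, H an affine subspace with H ∩ K ≠ ∅, and F the minimal cone of H ∩ K (the smallest face of K containing H ∩ K). Then H ∩ ri(F) ≠ ∅, where ri denotes relative interior. Moreover, H ∩ ri(K) = ∅ if and only if H^⊥ ∩ (K* \ K^⊥) ≠ ∅, where H^⊥ is the set of vectors orthogonal to the direction space of H and vanishing (with appropriate normalization) on H. -/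
open scoped RealInnerProductSpace

variable {Y : Type*} [NormedAddCommGroup Y] [InnerProductSpace ℝ Y] [FiniteDimensional ℝ Y]

/-- `F` is a face of the cone `K`. -/
def IsFace (K F : Set Y) : Prop :=
  F ⊆ K ∧ Convex ℝ F ∧
    ∀ y z : Y, y ∈ K → z ∈ K → (2⁻¹ : ℝ) • (y + z) ∈ F → y ∈ F ∧ z ∈ F


section AuxRI
open Set

set_option linter.unusedSectionVars false
set_option maxHeartbeats 1000000

variable {s : Set Y} {x z r : Y}

theorem mem_ri_iff :
    x ∈ intrinsicInterior ℝ s ↔ x ∈ affineSpan ℝ s ∧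
      ∃ U : Set Y, IsOpen U ∧ x ∈ U ∧ U ∩ (affineSpan ℝ s : Set Y) ⊆ s := by
  constructor
  · rintro hx
    obtain ⟨y, hy, rfl⟩ := hx
    refine ⟨y.2, ?_⟩
    rw [mem_interior_iff_mem_nhds, mem_nhds_subtype] at hy
    obtain ⟨t, ht, hts⟩ := hy
    obtain ⟨U, hUt, hUo, hxU⟩ := mem_nhds_iff.1 ht
    refine ⟨U, hUo, hxU, ?_⟩
    rintro w ⟨hwU, hwA⟩
    exact hts (show (⟨w, hwA⟩ : affineSpan ℝ s) ∈ _ from hUt hwU)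
  · rintro ⟨hxA, U, hUo, hxU, hUs⟩
    refine ⟨⟨x, hxA⟩, ?_, rfl⟩
    rw [mem_interior_iff_mem_nhds, mem_nhds_subtype]
    exact ⟨U, hUo.mem_nhds hxU, fun w hw => hUs ⟨hw, w.2⟩⟩

theorem mem_affineSpan_aux (hxA : x ∈ affineSpan ℝ s) (hzA : z ∈ affineSpan ℝ s) (c : ℝ) :
    x + c • (z - x) ∈ affineSpan ℝ s := by
  have := AffineSubspace.vadd_mem_of_mem_direction
    (Submodule.smul_mem _ c (AffineSubspace.vsub_mem_direction hzA hxA)) hxA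
  simpa [vsub_eq_sub, vadd_eq_add, add_comm] using this

/-- L1: extension past a relative-interior point. -/
theorem ri_extend (hx : x ∈ intrinsicInterior ℝ s) (hz : z ∈ s) :
    ∃ ε : ℝ, 0 < ε ∧ x + ε • (x - z) ∈ s := by
  obtain ⟨hxA, U, hUo, hxU, hUs⟩ := mem_ri_iff.1 hx
  have hc : Continuous fun t : ℝ => x + t • (x - z) := by continuity
  have h0 : (fun t : ℝ => x + t • (x - z)) 0 ∈ U := by simpa using hxU
  have hev : ∀ᶠ t in nhds (0:ℝ), x + t • (x - z) ∈ U :=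
    hc.continuousAt.eventually_mem (hUo.mem_nhds h0)
  obtain ⟨δ, hδ, hball⟩ := Metric.eventually_nhds_iff.1 hev
  have hd : dist (δ/2) (0:ℝ) < δ := by
    rw [Real.dist_eq, sub_zero, abs_of_pos (by positivity)]; linarith
  refine ⟨δ/2, by positivity, hUs ⟨hball hd, ?_⟩⟩
  rw [show x + (δ/2) • (x - z) = x + (-(δ/2)) • (z - x) by module]
  exact mem_affineSpan_aux hxA (subset_affineSpan ℝ s hz) _

/-- Combo lemma. -/
theorem combo_mem_ri (hs : Convex ℝ s) (hz : z ∈ s) (hr : r ∈ intrinsicInterior ℝ s)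
    {a b : ℝ} (ha : 0 ≤ a) (hb : 0 < b) (hab : a + b = 1) :
    a • z + b • r ∈ intrinsicInterior ℝ s := by
  have haeq : a = 1 - b := by linarith
  subst haeq
  obtain ⟨hrA, U, hUo, hrU, hUs⟩ := mem_ri_iff.1 hr
  have hzA : z ∈ affineSpan ℝ s := subset_affineSpan ℝ s hz
  refine mem_ri_iff.2 ⟨?_, {w | b⁻¹ • (w - (1-b) • z) ∈ U}, ?_, ?_, ?_⟩
  · have : (1-b) • z + b • r = z + b • (r - z) := by module
    rw [this]
    exact mem_affineSpan_aux hzA hrA b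
  · exact hUo.preimage ((continuous_id.sub continuous_const).const_smul b⁻¹)
  · simp only [mem_setOf_eq]
    have : b⁻¹ • ((1-b) • z + b • r - (1-b) • z) = r := by
      rw [add_sub_cancel_left, smul_smul, inv_mul_cancel₀ hb.ne', one_smul]
    rw [this]; exact hrU
  · rintro w ⟨hwU, hwA⟩
    set u := b⁻¹ • (w - (1-b) • z) with hu
    have huA : u ∈ affineSpan ℝ s := by
      have h2 : u = z + b⁻¹ • (w - z) := by
        rw [hu]
        have h3 : w - (1-b) • z = (w - z) + b • z := by module
        rw [h3, smul_add, smul_smul, inv_mul_cancel₀ hb.ne', one_smul]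
        abel
      rw [h2]
      exact mem_affineSpan_aux hzA hwA b⁻¹
    have hus : u ∈ s := hUs ⟨hwU, huA⟩
    have : w = (1-b) • z + b • u := by
      rw [hu, smul_smul, mul_inv_cancel₀ hb.ne', one_smul]; abel
    rw [this]
    exact hs hz hus ha hb.le hab

/-- For a set containing `0`, the affine span coincides with the linear span. -/
theorem affineSpan_eq_span (h0 : (0:Y) ∈ s) :
    (affineSpan ℝ s : Set Y) = (Submodule.span ℝ s : Set Y) := by
  apply Set.Subset.antisymm
  · intro p hp
    have : affineSpan ℝ s ≤ (Submodule.span ℝ s).toAffineSubspace :=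
      affineSpan_le.2 (Submodule.subset_span (R := ℝ))
    exact this hp
  · intro p hp
    refine Submodule.span_induction (fun a ha => subset_affineSpan ℝ s ha) ?_ ?_ ?_ hp
    · exact subset_affineSpan ℝ s h0
    · intro a b _ _ haA hbA
      have := AffineSubspace.smul_vsub_vadd_mem (affineSpan ℝ s) 1 haA
        (subset_affineSpan ℝ s h0) hbA
      simpa [vsub_eq_sub, vadd_eq_add, add_comm] using this
    · intro c a _ haA
      have := AffineSubspace.smul_vsub_vadd_mem (affineSpan ℝ s) c haA
        (subset_affineSpan ℝ s h0) (subset_affineSpan ℝ s h0)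
      simpa [vsub_eq_sub, vadd_eq_add] using this

/-- Supporting hyperplane theorem at a non-relative-interior point (for sets containing 0). -/
theorem exists_support (hs : Convex ℝ s) (h0 : (0:Y) ∈ s) (hx : x ∈ s)
    (hxri : x ∉ intrinsicInterior ℝ s) :
    ∃ y : Y, (∀ c ∈ s, ⟪y, x⟫ ≤ ⟪y, c⟫) ∧ ∃ c ∈ s, ⟪y, x⟫ < ⟪y, c⟫ := by
  classical
  set V := Submodule.span ℝ s with hV
  have hspan : (affineSpan ℝ s : Set Y) = (V : Set Y) := affineSpan_eq_span h0
  have hsV : s ⊆ (V : Set Y) := Submodule.subset_span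
  set C : Set V := (Subtype.val) ⁻¹' s with hC
  have hCconv : Convex ℝ C := hs.linear_preimage V.subtype
  -- a relative interior point r of s gives an interior point of C
  obtain ⟨r, hr⟩ := Set.Nonempty.intrinsicInterior hs ⟨x, hx⟩
  obtain ⟨hrA, U, hUo, hrU, hUs⟩ := mem_ri_iff.1 hr
  have hrs : r ∈ s := intrinsicInterior_subset hr
  have hrV : r ∈ V := hsV hrs
  have hrC : (⟨r, hrV⟩ : V) ∈ interior C := by
    apply interior_maximal (s := C) (t := Subtype.val ⁻¹' U) ?_
      (hUo.preimage continuous_subtype_val)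
    · exact hrU
    · intro v hv
      exact hUs ⟨hv, by rw [hspan]; exact v.2⟩
  -- x is not an interior point of C
  have hxV : x ∈ V := hsV hx
  have hxC : (⟨x, hxV⟩ : V) ∉ interior C := by
    intro hmem
    rw [mem_interior_iff_mem_nhds, mem_nhds_subtype] at hmem
    obtain ⟨u, hu, huC⟩ := hmem
    refine hxri (mem_ri_iff.2 ⟨subset_affineSpan ℝ s hx, interior u, isOpen_interior,
      mem_interior_iff_mem_nhds.2 hu, ?_⟩)
    rintro w ⟨hwU, hwA⟩
    have hwV : w ∈ V := by have : w ∈ (V : Set Y) := hspan ▸ hwA; exact this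
    exact huC (show (⟨w, hwV⟩ : V) ∈ Subtype.val ⁻¹' u from Set.mem_preimage.2 (interior_subset hwU))
  -- separate
  obtain ⟨f, u, hfu, hux⟩ := geometric_hahn_banach_open hCconv.interior
    isOpen_interior (convex_singleton (⟨x, hxV⟩ : V))
    (Set.disjoint_singleton_right.2 hxC)
  have hux' : u ≤ f ⟨x, hxV⟩ := hux _ rfl
  -- f ≤ u on all of C
  have hfC : ∀ c ∈ C, f c ≤ u := by
    intro c hc
    have hseg : ∀ t : ℝ, 0 < t → t ≤ 1 → f ((1-t) • c + t • (⟨r, hrV⟩ : V)) < u := by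
      intro t ht ht1
      exact hfu _ (hCconv.combo_self_interior_mem_interior hc hrC (by linarith) ht (by ring))
    have htend : Filter.Tendsto (fun t : ℝ => f ((1-t) • c + t • (⟨r, hrV⟩ : V)))
        (nhdsWithin 0 (Set.Ioi 0)) (nhds (f c)) := by
      have : Filter.Tendsto (fun t : ℝ => f ((1-t) • c + t • (⟨r, hrV⟩ : V)))
          (nhds 0) (nhds (f ((1-(0:ℝ)) • c + (0:ℝ) • (⟨r, hrV⟩ : V)))) := by
        apply Continuous.tendsto
        exact f.continuous.comp (by continuity)
      simpa using this.mono_left nhdsWithin_le_nhds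
    refine le_of_tendsto htend ?_
    filter_upwards [Ioo_mem_nhdsGT_of_mem (Set.left_mem_Ico.2 one_pos)] with t ht
    exact (hseg t ht.1 ht.2.le).le
  -- convert to an inner-product statement
  set y0 : V := (InnerProductSpace.toDual ℝ V).symm f with hy0
  have hfy : ∀ v : V, f v = ⟪(y0 : Y), (v : Y)⟫ := by
    intro v
    have : f v = ⟪y0, v⟫ := by
      rw [hy0]
      simp [InnerProductSpace.toDual_apply_apply]
    rw [this, ← Submodule.coe_inner]
  refine ⟨-(y0 : Y), ?_, ⟨r, hrs, ?_⟩⟩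
  · intro c hc
    have h1 : f ⟨c, hsV hc⟩ ≤ f ⟨x, hxV⟩ := le_trans (hfC _ hc) hux'
    rw [hfy, hfy] at h1
    simp only [inner_neg_left]
    exact neg_le_neg h1
  · have h1 : f ⟨r, hrV⟩ < f ⟨x, hxV⟩ := (hfu _ hrC).trans_le hux'
    rw [hfy, hfy] at h1
    simp only [inner_neg_left]
    exact neg_lt_neg h1

/-- L2: characterization of relative interior membership by segment extension. -/
theorem mem_ri_of_extend (hs : Convex ℝ s) (hx : x ∈ s)
    (hext : ∀ z ∈ s, ∃ ε : ℝ, 0 < ε ∧ x + ε • (x - z) ∈ s) :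
    x ∈ intrinsicInterior ℝ s := by
  obtain ⟨r, hr⟩ := Set.Nonempty.intrinsicInterior hs ⟨x, hx⟩
  obtain ⟨ε, hε, hz⟩ := hext r (intrinsicInterior_subset hr)
  have h1 : (0:ℝ) < 1 + ε := by linarith
  have key : x = (1/(1+ε)) • (x + ε • (x - r)) + (ε/(1+ε)) • r := by
    match_scalars <;> field_simp <;> ring
  rw [key]
  exact combo_mem_ri hs hz hr (by positivity) (by positivity) (by field_simp)

section ConeFace

variable {K F : Set Y}

theorem cone_add (hKconv : Convex ℝ K) (hKcone : ∀ c : ℝ, 0 ≤ c → ∀ x ∈ K, c • x ∈ K)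
    {a b : Y} (ha : a ∈ K) (hb : b ∈ K) : a + b ∈ K := by
  have h := hKconv ha hb (by norm_num : (0:ℝ) ≤ 2⁻¹) (by norm_num : (0:ℝ) ≤ 2⁻¹) (by norm_num)
  have := hKcone 2 (by norm_num) _ h
  rwa [smul_add, smul_smul, smul_smul, show (2:ℝ) * 2⁻¹ = 1 by norm_num, one_smul, one_smul]
    at this

theorem face_smul_le_two (hface : IsFace K F)
    (hKcone : ∀ c : ℝ, 0 ≤ c → ∀ x ∈ K, c • x ∈ K)
    {u : Y} (hu : u ∈ F) {c : ℝ} (hc : 0 < c) (hc2 : c ≤ 2) : c • u ∈ F := by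
  obtain ⟨hFK, -, hmid⟩ := hface
  have huK : u ∈ K := hFK hu
  have h1 : c • u ∈ K := hKcone c hc.le u huK
  have h2 : (2 - c) • u ∈ K := hKcone (2 - c) (by linarith) u huK
  have h3 : (2⁻¹ : ℝ) • (c • u + (2 - c) • u) = u := by
    rw [← add_smul, smul_smul]; norm_num
  exact (hmid _ _ h1 h2 (by rw [h3]; exact hu)).1

theorem face_smul (hface : IsFace K F)
    (hKcone : ∀ c : ℝ, 0 ≤ c → ∀ x ∈ K, c • x ∈ K)
    {u : Y} (hu : u ∈ F) {c : ℝ} (hc : 0 < c) : c • u ∈ F := by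
  obtain ⟨n, hn⟩ := pow_unbounded_of_one_lt c (one_lt_two (α := ℝ))
  induction n generalizing c u with
  | zero => exact face_smul_le_two hface hKcone hu hc (by norm_num at hn ⊢; linarith)
  | succ n ih =>
    rcases lt_or_ge c (2 ^ n) with h | h
    · exact ih hu hc h
    · have hc2 : c / 2 < 2 ^ n := by
        rw [div_lt_iff₀ (by norm_num : (0:ℝ) < 2)]
        calc c < 2 ^ (n+1) := hn
        _ = 2 ^ n * 2 := by ring
      have h1 : (c / 2) • u ∈ F := ih hu (by positivity) hc2
      have h2 : (2 : ℝ) • ((c / 2) • u) ∈ F :=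
        face_smul_le_two hface hKcone h1 (by norm_num) le_rfl
      rwa [smul_smul, show (2:ℝ) * (c/2) = c by ring] at h2

end ConeFace


section Main

variable {K : Set Y}

/-- Part 1: H meets the relative interior of the minimal face. -/
theorem part_one (hKconv : Convex ℝ K)
    (hKcone : ∀ c : ℝ, 0 ≤ c → ∀ x ∈ K, c • x ∈ K)
    (H : AffineSubspace ℝ Y) (hHK : ((H : Set Y) ∩ K).Nonempty)
    (F : Set Y) (hFface : IsFace K F) (hFsup : (H : Set Y) ∩ K ⊆ F)
    (hFmin : ∀ G : Set Y, IsFace K G → (H : Set Y) ∩ K ⊆ G → F ⊆ G) :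
    ((H : Set Y) ∩ intrinsicInterior ℝ F).Nonempty := by
  classical
  set C : Set Y := (H : Set Y) ∩ K with hC
  have hCconv : Convex ℝ C := (H.convex).inter hKconv
  obtain ⟨x, hxri⟩ := Set.Nonempty.intrinsicInterior hCconv hHK
  have hxC : x ∈ C := intrinsicInterior_subset hxri
  have hxK : x ∈ K := hxC.2
  -- shrinking lemma
  have hshrink : ∀ z ∈ K, ∀ ε ε' : ℝ, 0 < ε' → ε' ≤ ε → x - ε • z ∈ K → x - ε' • z ∈ K := by
    intro z hz ε ε' hε' hle hmem
    have hε : 0 < ε := lt_of_lt_of_le hε' hle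
    have key : x - ε' • z = (ε'/ε) • (x - ε • z) + (1 - ε'/ε) • x := by
      match_scalars <;> field_simp <;> ring
    rw [key]
    exact hKconv hmem hxK (by positivity) (by
      have : ε'/ε ≤ 1 := by rw [div_le_one hε]; exact hle
      linarith) (by ring)
  set Fx : Set Y := {z | z ∈ K ∧ ∃ ε : ℝ, 0 < ε ∧ x - ε • z ∈ K} with hFx
  have hxFx : x ∈ Fx := ⟨hxK, 1, one_pos, by
    have h1 : x - (1:ℝ) • x = (0:ℝ) • x := by module
    rw [h1]; exact hKcone 0 le_rfl x hxK⟩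
  -- Fx is a face
  have hFxface : IsFace K Fx := by
    refine ⟨fun z hz => hz.1, ?_, ?_⟩
    · rintro z₁ ⟨hz₁K, ε₁, hε₁, h₁⟩ z₂ ⟨hz₂K, ε₂, hε₂, h₂⟩ a b ha hb hab
      have ha' : a = 1 - b := by linarith
      subst ha'
      refine ⟨hKconv hz₁K hz₂K ha hb hab, min ε₁ ε₂, lt_min hε₁ hε₂, ?_⟩
      have m₁ := hshrink _ hz₁K ε₁ _ (lt_min hε₁ hε₂) (min_le_left _ _) h₁
      have m₂ := hshrink _ hz₂K ε₂ _ (lt_min hε₁ hε₂) (min_le_right _ _) h₂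
      have key : x - min ε₁ ε₂ • ((1-b) • z₁ + b • z₂)
          = (1-b) • (x - min ε₁ ε₂ • z₁) + b • (x - min ε₁ ε₂ • z₂) := by module
      rw [key]
      exact hKconv m₁ m₂ ha hb hab
    · rintro y z hyK hzK ⟨hmK, ε, hε, hKmem⟩
      have hy : x - (ε/2) • y = (x - ε • ((2⁻¹:ℝ) • (y + z))) + (ε/2) • z := by
        match_scalars <;> ring
      have hz : x - (ε/2) • z = (x - ε • ((2⁻¹:ℝ) • (y + z))) + (ε/2) • y := by
        match_scalars <;> ring
      exact ⟨⟨hyK, ε/2, by positivity, by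
          rw [hy]; exact cone_add hKconv hKcone hKmem (hKcone _ (by positivity) _ hzK)⟩,
        ⟨hzK, ε/2, by positivity, by
          rw [hz]; exact cone_add hKconv hKcone hKmem (hKcone _ (by positivity) _ hyK)⟩⟩
  -- H ∩ K ⊆ Fx
  have hCFx : C ⊆ Fx := by
    intro z hz
    obtain ⟨ε, hε, hmem⟩ := ri_extend hxri hz
    have hmemK : x + ε • (x - z) ∈ K := hmem.2
    have h1 : (0:ℝ) < 1 + ε := by linarith
    refine ⟨hz.2, ε/(1+ε), by positivity, ?_⟩
    have key : x - (ε/(1+ε)) • z = (1/(1+ε)) • (x + ε • (x - z)) := by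
      match_scalars <;> field_simp
    rw [key]
    exact hKcone _ (by positivity) _ hmemK
  -- F = Fx
  have hFsubFx : F ⊆ Fx := hFmin Fx hFxface hCFx
  have hFxsubF : Fx ⊆ F := by
    rintro z ⟨hzK, ε, hε, hw⟩
    have hxF : x ∈ F := hFsup hxC
    have h2w : (2:ℝ) • (x - ε • z) ∈ K := hKcone 2 (by norm_num) _ hw
    have h2ez : (2*ε) • z ∈ K := hKcone _ (by positivity) _ hzK
    have key : (2⁻¹:ℝ) • ((2:ℝ) • (x - ε • z) + (2*ε) • z) = x := by
      match_scalars <;> ring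
    have := (hFface.2.2 _ _ h2w h2ez (by rw [key]; exact hxF)).2
    have h3 := face_smul hFface hKcone this (show (0:ℝ) < 1/(2*ε) by positivity)
    rwa [smul_smul, show (1/(2*ε)) * (2*ε) = 1 by field_simp, one_smul] at h3
  have hFeq : F = Fx := Set.Subset.antisymm hFsubFx hFxsubF
  -- x is in the relative interior of Fx
  have hFxconv : Convex ℝ Fx := hFeq ▸ hFface.2.1
  refine ⟨x, hxC.1, ?_⟩
  rw [hFeq]
  apply mem_ri_of_extend hFxconv hxFx
  rintro z ⟨hzK, ε, hε, hw⟩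
  have h1 : (0:ℝ) < 1 + ε := by linarith
  refine ⟨ε, hε, ?_, 1/(2*(1+ε)), by positivity, ?_⟩
  · have key : x + ε • (x - z) = ε • x + (x - ε • z) := by module
    rw [key]
    exact cone_add hKconv hKcone (hKcone ε hε.le x hxK) hw
  · have key : x - (1/(2*(1+ε))) • (x + ε • (x - z))
        = (2⁻¹:ℝ) • x + (ε/(2*(1+ε))) • z := by
      match_scalars <;> field_simp <;> ring
    rw [key]
    exact cone_add hKconv hKcone (hKcone _ (by norm_num) _ hxK)
      (hKcone _ (by positivity) _ hzK)

end Main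

section Main2

variable {K : Set Y}

theorem part_two (hKconv : Convex ℝ K)
    (hKcone : ∀ c : ℝ, 0 ≤ c → ∀ x ∈ K, c • x ∈ K) (hK0 : (0 : Y) ∈ K)
    (H : AffineSubspace ℝ Y) (hHK : ((H : Set Y) ∩ K).Nonempty) :
    ((H : Set Y) ∩ intrinsicInterior ℝ K = ∅ ↔
      ∃ y ∈ dualSet K, y ∉ perpSet K ∧ ∀ h ∈ (H : Set Y), ⟪y, h⟫ = 0) := by
  classical
  obtain ⟨x₀, hx₀H, hx₀K⟩ := hHK
  constructor
  · -- hard direction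
    intro hempty
    set Q : Set Y := {q : Y | ∃ k ∈ K, ∃ w ∈ H.direction, q = k + w} with hQ
    have hQconv : Convex ℝ Q := by
      rintro q₁ ⟨k₁, hk₁, w₁, hw₁, rfl⟩ q₂ ⟨k₂, hk₂, w₂, hw₂, rfl⟩ a b ha hb hab
      exact ⟨a • k₁ + b • k₂, hKconv hk₁ hk₂ ha hb hab,
        a • w₁ + b • w₂, H.direction.add_mem (H.direction.smul_mem a hw₁)
          (H.direction.smul_mem b hw₂), by module⟩
    have h0Q : (0:Y) ∈ Q := ⟨0, hK0, 0, H.direction.zero_mem, by simp⟩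
    have hKQ : K ⊆ Q := fun k hk => ⟨k, hk, 0, H.direction.zero_mem, by simp⟩
    have hxQ : x₀ ∈ Q := hKQ hx₀K
    -- x₀ is not in the relative interior of Q
    have hxnotri : x₀ ∉ intrinsicInterior ℝ Q := by
      intro hri
      obtain ⟨r, hr⟩ := Set.Nonempty.intrinsicInterior hKconv ⟨x₀, hx₀K⟩
      have hrK : r ∈ K := intrinsicInterior_subset hr
      obtain ⟨ε, hε, hmem⟩ := ri_extend hri (hKQ hrK)
      obtain ⟨k, hk, w, hw, heq⟩ := hmem
      have h1 : (0:ℝ) < 1 + ε := by linarith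
      set h : Y := x₀ - (1/(1+ε)) • w with hh
      have hhH : h ∈ (H : Set Y) := by
        have := AffineSubspace.vadd_mem_of_mem_direction
          (H.direction.smul_mem (-(1/(1+ε))) hw) hx₀H
        simpa [hh, vadd_eq_add, neg_smul, sub_eq_add_neg, add_comm] using this
      have hkval : k = x₀ + ε • (x₀ - r) - w := by rw [heq]; abel
      have hcombo : h = (1/(1+ε)) • k + (ε/(1+ε)) • r := by
        rw [hh, hkval]
        match_scalars <;> field_simp <;> ring
      have : h ∈ intrinsicInterior ℝ K := by
        rw [hcombo]
        exact combo_mem_ri hKconv hk hr (by positivity) (by positivity) (by field_simp)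
      exact Set.eq_empty_iff_forall_notMem.1 hempty h ⟨hhH, this⟩
    obtain ⟨y, hy1, c₀, hc₀Q, hstrict⟩ := exists_support hQconv h0Q hxQ hxnotri
    -- ⟪y, x₀⟫ = 0
    have hx0 : ⟪y, x₀⟫ = 0 := by
      have hle : ⟪y, x₀⟫ ≤ (0:ℝ) := by
        have := hy1 0 h0Q
        simpa using this
      have h2 : ⟪y, x₀⟫ ≤ ⟪y, (2:ℝ) • x₀⟫ := hy1 _ (hKQ (hKcone 2 (by norm_num) _ hx₀K))
      rw [inner_smul_right] at h2
      linarith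
    have hyK : ∀ k ∈ K, 0 ≤ ⟪y, k⟫ := fun k hk => hx0 ▸ hy1 k (hKQ hk)
    have hyW : ∀ w ∈ H.direction, ⟪y, w⟫ = 0 := by
      intro w hw
      have hp : (0:Y) + w ∈ Q := ⟨0, hK0, w, hw, rfl⟩
      have hm : (0:Y) + (-w) ∈ Q := ⟨0, hK0, -w, H.direction.neg_mem hw, rfl⟩
      have h₁ := hy1 _ hp
      have h₂ := hy1 _ hm
      rw [hx0] at h₁ h₂
      simp only [zero_add, inner_neg_right] at h₁ h₂
      linarith
    refine ⟨y, ?_, ?_, ?_⟩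
    · intro k hk; rw [real_inner_comm]; exact hyK k hk
    · -- y ∉ perpSet K
      obtain ⟨k₀, hk₀, w₀, hw₀, rfl⟩ := hc₀Q
      intro hperp
      have : ⟪y, k₀ + w₀⟫ = 0 := by
        rw [inner_add_right, hyW w₀ hw₀, real_inner_comm, hperp k₀ hk₀]; ring
      rw [hx0, this] at hstrict
      exact lt_irrefl _ hstrict
    · intro h hh
      have : h - x₀ ∈ H.direction := by
        have := AffineSubspace.vsub_mem_direction hh hx₀H
        simpa [vsub_eq_sub] using this
      have h1 := hyW _ this
      rw [inner_sub_right, hx0] at h1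
      linarith
  · -- easy direction
    rintro ⟨y, hdual, hnperp, hvan⟩
    rw [Set.eq_empty_iff_forall_notMem]
    rintro p ⟨hpH, hpri⟩
    apply hnperp
    intro z hz
    obtain ⟨ε, hε, hmem⟩ := ri_extend hpri hz
    have h1 : 0 ≤ ⟪p + ε • (p - z), y⟫ := hdual _ hmem
    have h2 : ⟪p, y⟫ = 0 := by rw [real_inner_comm]; exact hvan p hpH
    have h3 : 0 ≤ ⟪z, y⟫ := hdual z hz
    have h4 : ⟪p + ε • (p - z), y⟫ = (1+ε) * ⟪p, y⟫ - ε * ⟪z, y⟫ := by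
      rw [inner_add_left, real_inner_smul_left, inner_sub_left]
      ring
    rw [h4, h2] at h1
    nlinarith

end Main2


/-- Let `H` be an affine subspace meeting `K`, and `F` the minimal cone of `H ∩ K`.
Then `H` meets the relative interior of `F`; moreover `H ∩ ri K = ∅` iff there is
`y ∈ K* \ K^⊥` vanishing on `H`. -/
theorem stmt_18 (K : Set Y) (hKcl : IsClosed K) (hKconv : Convex ℝ K)
    (hKcone : ∀ c : ℝ, 0 ≤ c → ∀ x ∈ K, c • x ∈ K) (hK0 : (0 : Y) ∈ K)
    (H : AffineSubspace ℝ Y) (hHK : ((H : Set Y) ∩ K).Nonempty)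
    (F : Set Y) (hFface : IsFace K F) (hFsup : (H : Set Y) ∩ K ⊆ F)
    (hFmin : ∀ G : Set Y, IsFace K G → (H : Set Y) ∩ K ⊆ G → F ⊆ G) :
    ((H : Set Y) ∩ intrinsicInterior ℝ F).Nonempty ∧
    ((H : Set Y) ∩ intrinsicInterior ℝ K = ∅ ↔
      ∃ y ∈ dualSet K, y ∉ perpSet K ∧ ∀ h ∈ (H : Set Y), ⟪y, h⟫ = 0) := by
  exact ⟨part_one hKconv hKcone H hHK F hFface hFsup hFmin,
    part_two hKconv hKcone hK0 H hHK⟩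

end AuxRI
end

section
/- Consider the 3×3 SDP system: find x_1, x_2 ∈ ℝ such that b − x_1 a_1 − x_2 a_2 ⪰ 0, where a_1 = E_{11}, a_2 = E_{12}+E_{21}, b = E_{13}+E_{31}+E_{22}. This system is weakly infeasible: (i) it is infeasible, as certified by (y_1, y_2, y_3) ∈ FR_3(S^3_+) with y_1 = E_{33}, y_2 = 2E_{22} − E_{13} − E_{31}, y_3 = −(E_{13}+E_{31})/2, which satisfy a_i • y_j = 0 for all i ∈ {1,2}, j ∈ {1,2,3}, b • y_1 = b • y_2 = 0, b • y_3 = −1; and (ii) its alternative system (y ⪰ 0, a_1 • y = a_2 • y = 0, b • y = −1) is infeasible, since (a_1, b) ∈ FR_2(S^3_+). -/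
open Matrix

private lemma lin_nonneg_zero {c d : ℝ} (h : ∀ t : ℝ, 0 ≤ 2 * t * c + d) : c = 0 := by
  by_contra hc
  have h2 := h (-(d+1)/(2*c))
  have : 2 * (-(d+1)/(2*c)) * c = -(d+1) := by field_simp
  linarith [this ▸ h2]

private lemma psd_sym {x : Matrix (Fin 3) (Fin 3) ℝ} (hx : x.PosSemidef) (i j : Fin 3) :
    x i j = x j i := by
  have hs := congrFun (congrFun hx.1 j) i
  simpa [Matrix.conjTranspose_apply] using hs

private lemma psd_02 {x : Matrix (Fin 3) (Fin 3) ℝ} (hx : x.PosSemidef) (h : x 2 2 = 0) :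
    x 0 2 = 0 := by
  have hs := psd_sym hx 2 0
  refine lin_nonneg_zero (c := x 0 2) (d := x 0 0) fun t => ?_
  have hq := hx.dotProduct_mulVec_nonneg ![1, 0, t]
  simp [dotProduct, Matrix.mulVec, Fin.sum_univ_three] at hq
  rw [hs, h] at hq; ring_nf at hq ⊢; linarith

private lemma psd_02' {x : Matrix (Fin 3) (Fin 3) ℝ} (hx : x.PosSemidef) (h : x 0 0 = 0) :
    x 0 2 = 0 := by
  have hs := psd_sym hx 2 0
  refine lin_nonneg_zero (c := x 0 2) (d := x 2 2) fun t => ?_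
  have hq := hx.dotProduct_mulVec_nonneg ![t, 0, 1]
  simp [dotProduct, Matrix.mulVec, Fin.sum_univ_three] at hq
  rw [hs, h] at hq; ring_nf at hq ⊢; linarith

private lemma psd_diag {x : Matrix (Fin 3) (Fin 3) ℝ} (hx : x.PosSemidef) (i : Fin 3) :
    0 ≤ x i i := by
  have hq := hx.dotProduct_mulVec_nonneg (Pi.single i 1)
  simpa using hq

/-- The 3×3 SDP system `b - x₁ a₁ - x₂ a₂ ⪰ 0` with `a₁ = E₁₁`, `a₂ = E₁₂+E₂₁`,
`b = E₁₃+E₃₁+E₂₂` is weakly infeasible: `(y₁,y₂,y₃) ∈ FR₃(S³₊)` certifies infeasibility,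
`(a₁,b) ∈ FR₂(S³₊)`, and both the system and its alternative system are infeasible. -/
theorem stmt_19 (a₁ a₂ b y₁ y₂ y₃ : Matrix (Fin 3) (Fin 3) ℝ)
    (ha₁ : a₁ = !![1, 0, 0; 0, 0, 0; 0, 0, 0])
    (ha₂ : a₂ = !![0, 1, 0; 1, 0, 0; 0, 0, 0])
    (hb : b = !![0, 0, 1; 0, 1, 0; 1, 0, 0])
    (hy₁ : y₁ = !![0, 0, 0; 0, 0, 0; 0, 0, 1])
    (hy₂ : y₂ = !![0, 0, -1; 0, 2, 0; -1, 0, 0])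
    (hy₃ : y₃ = !![0, 0, -(1/2); 0, 0, 0; -(1/2), 0, 0]) :
    frSeqM ![y₁, y₂, y₃] ∧
    (a₁ * y₁).trace = 0 ∧ (a₂ * y₁).trace = 0 ∧ (b * y₁).trace = 0 ∧
    (a₁ * y₂).trace = 0 ∧ (a₂ * y₂).trace = 0 ∧ (b * y₂).trace = 0 ∧
    (a₁ * y₃).trace = 0 ∧ (a₂ * y₃).trace = 0 ∧ (b * y₃).trace = -1 ∧
    (¬ ∃ x₁ x₂ : ℝ, (b - x₁ • a₁ - x₂ • a₂).PosSemidef) ∧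
    frSeqM ![a₁, b] ∧
    (¬ ∃ y : Matrix (Fin 3) (Fin 3) ℝ, y.PosSemidef ∧
        (a₁ * y).trace = 0 ∧ (a₂ * y).trace = 0 ∧ (b * y).trace = -1) := by
  subst ha₁ ha₂ hb hy₁ hy₂ hy₃
  have T1 : ∀ z : Matrix (Fin 3) (Fin 3) ℝ,
      ((!![0, 0, 0; 0, 0, 0; 0, 0, 1] : Matrix (Fin 3) (Fin 3) ℝ) * z).trace = z 2 2 := by
    intro z
    norm_num [Matrix.trace, Matrix.diag, Fin.sum_univ_three, Matrix.mul_apply, Matrix.vecHead, Matrix.vecTail, Matrix.cons_val_two]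
  have T2 : ∀ z : Matrix (Fin 3) (Fin 3) ℝ,
      ((!![0, 0, -1; 0, 2, 0; -1, 0, 0] : Matrix (Fin 3) (Fin 3) ℝ) * z).trace
        = 2 * z 1 1 - z 2 0 - z 0 2 := by
    intro z
    norm_num [Matrix.trace, Matrix.diag, Fin.sum_univ_three, Matrix.mul_apply, Matrix.vecHead, Matrix.vecTail, Matrix.cons_val_two]
    try ring
  have T3 : ∀ z : Matrix (Fin 3) (Fin 3) ℝ,
      ((!![0, 0, -(1/2); 0, 0, 0; -(1/2), 0, 0] : Matrix (Fin 3) (Fin 3) ℝ) * z).trace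
        = -(1/2) * z 2 0 - (1/2) * z 0 2 := by
    intro z
    norm_num [Matrix.trace, Matrix.diag, Fin.sum_univ_three, Matrix.mul_apply, Matrix.vecHead, Matrix.vecTail, Matrix.cons_val_two]
    try ring
  have Ta : ∀ z : Matrix (Fin 3) (Fin 3) ℝ,
      ((!![1, 0, 0; 0, 0, 0; 0, 0, 0] : Matrix (Fin 3) (Fin 3) ℝ) * z).trace = z 0 0 := by
    intro z
    norm_num [Matrix.trace, Matrix.diag, Fin.sum_univ_three, Matrix.mul_apply, Matrix.vecHead, Matrix.vecTail, Matrix.cons_val_two]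
  have Tb : ∀ z : Matrix (Fin 3) (Fin 3) ℝ,
      ((!![0, 0, 1; 0, 1, 0; 1, 0, 0] : Matrix (Fin 3) (Fin 3) ℝ) * z).trace
        = z 2 0 + z 1 1 + z 0 2 := by
    intro z
    norm_num [Matrix.trace, Matrix.diag, Fin.sum_univ_three, Matrix.mul_apply, Matrix.vecHead, Matrix.vecTail, Matrix.cons_val_two]
    try ring
  refine ⟨?_, ?_, ?_, ?_, ?_, ?_, ?_, ?_, ?_, ?_, ?_, ?_, ?_⟩
  · -- frSeqM ![y₁, y₂, y₃]
    constructor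
    · intro i
      fin_cases i <;> · ext a b; fin_cases a <;> fin_cases b <;> rfl
    · intro i x hx hlt
      fin_cases i
      · show 0 ≤ ((!![0, 0, 0; 0, 0, 0; 0, 0, 1] : Matrix (Fin 3) (Fin 3) ℝ) * x).trace
        rw [T1]; exact psd_diag hx 2
      · have h0 : ((!![0, 0, 0; 0, 0, 0; 0, 0, 1] : Matrix (Fin 3) (Fin 3) ℝ) * x).trace = 0 :=
          hlt 0 (by decide)
        rw [T1] at h0
        have h02 := psd_02 hx h0
        have h20 := psd_sym hx 2 0
        have h11 := psd_diag hx 1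
        show 0 ≤ ((!![0, 0, -1; 0, 2, 0; -1, 0, 0] : Matrix (Fin 3) (Fin 3) ℝ) * x).trace
        rw [T2]
        linarith
      · have h0 : ((!![0, 0, 0; 0, 0, 0; 0, 0, 1] : Matrix (Fin 3) (Fin 3) ℝ) * x).trace = 0 :=
          hlt 0 (by decide)
        rw [T1] at h0
        have h02 := psd_02 hx h0
        have h20 := psd_sym hx 2 0
        show 0 ≤ ((!![0, 0, -(1/2); 0, 0, 0; -(1/2), 0, 0] : Matrix (Fin 3) (Fin 3) ℝ) * x).trace
        rw [T3]
        linarith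
  · norm_num [Matrix.trace, Matrix.diag, Fin.sum_univ_three, Matrix.mul_apply, Matrix.vecHead,
      Matrix.vecTail, Matrix.cons_val_two]
  · norm_num [Matrix.trace, Matrix.diag, Fin.sum_univ_three, Matrix.mul_apply, Matrix.vecHead,
      Matrix.vecTail, Matrix.cons_val_two]
  · norm_num [Matrix.trace, Matrix.diag, Fin.sum_univ_three, Matrix.mul_apply, Matrix.vecHead,
      Matrix.vecTail, Matrix.cons_val_two]
  · norm_num [Matrix.trace, Matrix.diag, Fin.sum_univ_three, Matrix.mul_apply, Matrix.vecHead,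
      Matrix.vecTail, Matrix.cons_val_two]
  · norm_num [Matrix.trace, Matrix.diag, Fin.sum_univ_three, Matrix.mul_apply, Matrix.vecHead,
      Matrix.vecTail, Matrix.cons_val_two]
  · norm_num [Matrix.trace, Matrix.diag, Fin.sum_univ_three, Matrix.mul_apply, Matrix.vecHead,
      Matrix.vecTail, Matrix.cons_val_two]
  · norm_num [Matrix.trace, Matrix.diag, Fin.sum_univ_three, Matrix.mul_apply, Matrix.vecHead,
      Matrix.vecTail, Matrix.cons_val_two]
  · norm_num [Matrix.trace, Matrix.diag, Fin.sum_univ_three, Matrix.mul_apply, Matrix.vecHead,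
      Matrix.vecTail, Matrix.cons_val_two]
  · norm_num [Matrix.trace, Matrix.diag, Fin.sum_univ_three, Matrix.mul_apply, Matrix.vecHead,
      Matrix.vecTail, Matrix.cons_val_two]
  · -- primal infeasible
    rintro ⟨x₁, x₂, hps⟩
    have h22 : (!![0, 0, 1; 0, 1, 0; 1, 0, 0] - x₁ • !![1, 0, 0; 0, 0, 0; 0, 0, 0]
        - x₂ • !![0, 1, 0; 1, 0, 0; 0, 0, 0] : Matrix (Fin 3) (Fin 3) ℝ) 2 2 = 0 := by
      simp [Matrix.sub_apply, Matrix.smul_apply]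
    have h02 := psd_02 hps h22
    simp [Matrix.sub_apply, Matrix.smul_apply] at h02
  · -- frSeqM ![a₁, b]
    constructor
    · intro i
      fin_cases i <;> · ext a b; fin_cases a <;> fin_cases b <;> rfl
    · intro i x hx hlt
      fin_cases i
      · show 0 ≤ ((!![1, 0, 0; 0, 0, 0; 0, 0, 0] : Matrix (Fin 3) (Fin 3) ℝ) * x).trace
        rw [Ta]; exact psd_diag hx 0
      · have h0 : ((!![1, 0, 0; 0, 0, 0; 0, 0, 0] : Matrix (Fin 3) (Fin 3) ℝ) * x).trace = 0 :=
          hlt 0 (by decide)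
        rw [Ta] at h0
        have h02 := psd_02' hx h0
        have h20 := psd_sym hx 2 0
        have h11 := psd_diag hx 1
        show 0 ≤ ((!![0, 0, 1; 0, 1, 0; 1, 0, 0] : Matrix (Fin 3) (Fin 3) ℝ) * x).trace
        rw [Tb]
        linarith
  · -- alternative infeasible
    rintro ⟨y, hy, h1, h2, h3⟩
    rw [Ta] at h1
    rw [Tb] at h3
    have h02 := psd_02' hy h1
    have h20 := psd_sym hy 2 0
    have h11 := psd_diag hy 1
    linarith
end
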